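/- arXiv:1202.6095 — 2 statements merged into one kernel-verified Lean document; each statement's English description precedes it below -/
import Mathlib

section
/- Fix an odd integer t ≥ 3 and reals λ ≥ 0, ρ ≥ 0. Then the scaled density-evolution update for the even-weight subcode converges: lim_{n→∞} (n−1)·f̃_n(λ/(n−1); ρ/(n−1)) = ρ·φ(λ;t−1) + (1/(t−1)!)·χ(λ;t), where the limit is over n large enough that λ/(n−1) and ρ/(n−1) lie in [0,1]. -/
open Finset Filter

/-- `ℓ(i,δ,j) = i − δ + 2j + 1` (natural subtraction; the defining ranges guarantee
`i ≥ δ` wherever this is used). -/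
def ell (i δ j : ℕ) : ℕ := i - δ + 2 * j + 1

/-- `V(n,i,δ,j) = C(ℓ, ℓ−j)·C(n−ℓ−1, δ−1−j)/C(n−1,i)`. -/
noncomputable def V (n i δ j : ℕ) : ℝ :=
  (Nat.choose (ell i δ j) (ell i δ j - j) : ℝ) *
    (Nat.choose (n - ell i δ j - 1) (δ - 1 - j) : ℝ) / (Nat.choose (n - 1) i : ℝ)

/-- Binomial approximation `Â_l = (n+1)^{−t}·C(n,l)`. -/
noncomputable def Ahat (t n l : ℕ) : ℝ :=
  ((n : ℝ) + 1) ^ (-(t : ℤ)) * (Nat.choose n l : ℝ)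

/-- Approximate weight distribution of the even-weight subcode:
`Ã_l = (n+1)^{−t}·C(n,l)` for even `l`, and `Ã_l = 0` for odd `l`. -/
noncomputable def Atil (t n l : ℕ) : ℝ :=
  if l % 2 = 0 then Ahat t n l else 0

/-- `P̃_n(i)`. -/
noncomputable def Ptil (t n i : ℕ) : ℝ :=
  if i < t then 0
  else if i ≤ n - t - 2 then
    1 - ∑ δ ∈ Icc 1 t, ∑ j ∈ range δ,
      (((n : ℝ) - (ell i δ j : ℝ)) / (n : ℝ)) * Atil t n (ell i δ j) * V n i δ j
  else 1

/-- `Q̃_n(i)`. -/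
noncomputable def Qtil (t n i : ℕ) : ℝ :=
  if i ≤ t + 1 then 0
  else
    ∑ δ ∈ Icc 1 t, ∑ j ∈ range δ,
      (((ell i δ j : ℝ) + 1) / (n : ℝ)) * Atil t n (ell i δ j + 1) * V n i δ j

/-- Density-evolution map for the even-weight subcode:
`f̃_n(x;p) = ∑_{i=0}^{n−1} C(n−1,i)·x^i·(1−x)^{n−1−i}·(p·P̃_n(i) + (1−p)·Q̃_n(i))`. -/
noncomputable def fDEtil (t n : ℕ) (x p : ℝ) : ℝ :=
  ∑ i ∈ range n, (Nat.choose (n - 1) i : ℝ) * x ^ i * (1 - x) ^ (n - 1 - i) *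
    (p * Ptil t n i + (1 - p) * Qtil t n i)

/-- Poisson tail probability `φ(λ;k) = ∑_{i=k+1}^∞ (λ^i/i!)·e^{−λ}`. -/
noncomputable def phi (lam : ℝ) (k : ℕ) : ℝ :=
  ∑' i : ℕ, if k + 1 ≤ i then lam ^ i / (Nat.factorial i : ℝ) * Real.exp (-lam) else 0

/-- Poisson tail probability restricted to odd indices:
`χ(λ;k) = ∑_{i>k, i odd} (λ^i/i!)·e^{−λ}`. -/
noncomputable def chi (lam : ℝ) (k : ℕ) : ℝ :=
  ∑' i : ℕ, if k + 1 ≤ i ∧ Odd i then lam ^ i / (Nat.factorial i : ℝ) * Real.exp (-lam) else 0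


lemma hcast : Tendsto (fun n : ℕ => (n:ℝ)) atTop atTop := tendsto_natCast_atTop_atTop

lemma lim_inv_shift (c : ℝ) : Tendsto (fun n : ℕ => 1 / ((n:ℝ) + c)) atTop (nhds 0) := by
  have h := tendsto_inv_atTop_zero.comp (tendsto_atTop_add_const_right atTop c hcast)
  simpa [Function.comp_def, one_div] using h

lemma cast_choose_prod {n k : ℕ} (h : k ≤ n) :
    (k.factorial : ℝ) * (n.choose k : ℝ) = ∏ r ∈ range k, ((n:ℝ) - r) := by
  have h2' : (k.factorial * n.choose k : ℕ) = n.descFactorial k :=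
    (Nat.descFactorial_eq_factorial_mul_choose n k).symm
  have h2 : ((k.factorial * n.choose k : ℕ) : ℝ) = ((n.descFactorial k : ℕ) : ℝ) := by
    exact_mod_cast congrArg (Nat.cast : ℕ → ℝ) h2'
  push_cast at h2
  rw [h2, Nat.descFactorial_eq_prod_range, Nat.cast_prod]
  refine prod_congr rfl fun r hr => ?_
  rw [Nat.cast_sub (le_of_lt (lt_of_lt_of_le (mem_range.mp hr) h))]

lemma lim_choose (k : ℕ) :
    Tendsto (fun n : ℕ => ((n.choose k : ℝ)) / (n:ℝ)^k) atTop (nhds (1 / (k.factorial : ℝ))) := by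
  have hfac : (0:ℝ) < (k.factorial : ℝ) := by exact_mod_cast k.factorial_pos
  have hmain : Tendsto (fun n : ℕ => (∏ r ∈ range k, (1 - (r:ℝ)/(n:ℝ))) / (k.factorial : ℝ))
      atTop (nhds (1 / (k.factorial : ℝ))) := by
    have hprod : Tendsto (fun n : ℕ => (∏ r ∈ range k, (1 - (r:ℝ)/(n:ℝ)))) atTop (nhds 1) := by
      have := tendsto_finset_prod (range k)
        (fun r _ => (tendsto_const_nhds.sub (tendsto_const_div_atTop_nhds_zero_nat (r:ℝ)) :
          Tendsto (fun n : ℕ => (1:ℝ) - (r:ℝ)/(n:ℝ)) atTop (nhds (1 - 0))))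
      simpa using this
    simpa using hprod.div_const (k.factorial : ℝ)
  refine Tendsto.congr' ?_ hmain
  filter_upwards [eventually_ge_atTop (max k 1)] with n hn
  have hk : k ≤ n := le_trans (le_max_left _ _) hn
  have hn1 : 1 ≤ n := le_trans (le_max_right _ _) hn
  have hn' : (0:ℝ) < (n:ℝ) := by exact_mod_cast hn1
  rw [div_eq_div_iff (ne_of_gt hfac) (by positivity : ((n:ℝ)^k) ≠ 0)]
  calc (∏ r ∈ range k, (1 - (r:ℝ)/(n:ℝ))) * (n:ℝ)^k
      = ∏ r ∈ range k, ((1 - (r:ℝ)/(n:ℝ)) * (n:ℝ)) := by rw [prod_mul_distrib, prod_const, card_range]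
    _ = ∏ r ∈ range k, ((n:ℝ) - r) := by
        refine prod_congr rfl fun r _ => ?_
        field_simp
    _ = (k.factorial : ℝ) * (n.choose k : ℝ) := (cast_choose_prod hk).symm
    _ = (n.choose k : ℝ) * (k.factorial : ℝ) := by ring

lemma lim_choose_sub (k s : ℕ) :
    Tendsto (fun n : ℕ => (((n - s).choose k : ℝ)) / ((n:ℝ) - s)^k) atTop
      (nhds (1 / (k.factorial : ℝ))) := by
  have h := (lim_choose k).comp (tendsto_sub_atTop_nat s)
  refine Tendsto.congr' ?_ h
  filter_upwards [eventually_ge_atTop s] with n hn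
  simp only [Function.comp]
  rw [Nat.cast_sub hn]

lemma lim_div_add_one : Tendsto (fun n : ℕ => (n:ℝ) / ((n:ℝ)+1)) atTop (nhds 1) := by
  have h : Tendsto (fun n : ℕ => 1 - 1/((n:ℝ)+1)) atTop (nhds 1) := by
    simpa using tendsto_const_nhds.sub (lim_inv_shift 1)
  refine Tendsto.congr (fun n => ?_) h
  have : ((n:ℝ)+1) ≠ 0 := by positivity
  field_simp
  ring

lemma lim_div_sub_one : Tendsto (fun n : ℕ => (n:ℝ) / ((n:ℝ)-1)) atTop (nhds 1) := by
  have h0 : Tendsto (fun n : ℕ => 1 + 1/((n:ℝ)+(-1))) atTop (nhds 1) := by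
    simpa using tendsto_const_nhds.add (lim_inv_shift (-1))
  refine Tendsto.congr' ?_ h0
  filter_upwards [eventually_ge_atTop 2] with n hn
  have h2 : (2:ℝ) ≤ (n:ℝ) := by exact_mod_cast hn
  have : ((n:ℝ)-1) ≠ 0 := by linarith
  rw [show (n:ℝ) + (-1) = (n:ℝ) - 1 by ring]
  field_simp
  ring

lemma lim_pow1 (b c : ℕ) :
    Tendsto (fun n : ℕ => (n:ℝ)^(b+c) / (((n:ℝ)+1)^b * ((n:ℝ)-1)^c)) atTop (nhds 1) := by
  have h : Tendsto (fun n : ℕ => ((n:ℝ)/((n:ℝ)+1))^b * ((n:ℝ)/((n:ℝ)-1))^c) atTop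
      (nhds 1) := by
    simpa using (lim_div_add_one.pow b).mul (lim_div_sub_one.pow c)
  refine Tendsto.congr' ?_ h
  filter_upwards [eventually_ge_atTop 2] with n hn
  have h2 : (2:ℝ) ≤ (n:ℝ) := by exact_mod_cast hn
  have h1 : ((n:ℝ)+1) ≠ 0 := by linarith
  have hm : ((n:ℝ)-1) ≠ 0 := by linarith
  rw [div_pow, div_pow, pow_add]
  field_simp

lemma lim_pow0 (a b c : ℕ) (h : a < b + c) :
    Tendsto (fun n : ℕ => (n:ℝ)^a / (((n:ℝ)+1)^b * ((n:ℝ)-1)^c)) atTop (nhds 0) := by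
  have hk : b + c - a ≠ 0 := by omega
  have hinv : Tendsto (fun n : ℕ => (1/(n:ℝ))^(b+c-a)) atTop (nhds 0) := by
    have := (lim_inv_shift 0).pow (b+c-a)
    simpa [zero_pow hk] using this
  have h1 : Tendsto (fun n : ℕ =>
      (n:ℝ)^(b+c) / (((n:ℝ)+1)^b * ((n:ℝ)-1)^c) * (1/(n:ℝ))^(b+c-a)) atTop (nhds 0) := by
    simpa using (lim_pow1 b c).mul hinv
  refine Tendsto.congr' ?_ h1
  filter_upwards [eventually_ge_atTop 2] with n hn
  have h2 : (2:ℝ) ≤ (n:ℝ) := by exact_mod_cast hn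
  have h1 : ((n:ℝ)+1) ≠ 0 := by linarith
  have hm : ((n:ℝ)-1) ≠ 0 := by linarith
  have hn0 : (n:ℝ) ≠ 0 := by linarith
  rw [div_pow, one_pow]
  have hsplit : (n:ℝ)^(b+c) = (n:ℝ)^a * (n:ℝ)^(b+c-a) := by
    rw [← pow_add]; congr 1; omega
  have hz : ((n:ℝ))^(b+c-a) ≠ 0 := by positivity
  rw [hsplit]
  field_simp

lemma lim_pmf (lam : ℝ) (i : ℕ) :
    Tendsto (fun n : ℕ => ((n - 1).choose i : ℝ) * (lam/((n:ℝ)-1))^i *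
      (1 - lam/((n:ℝ)-1))^(n-1-i)) atTop (nhds (lam^i / (i.factorial : ℝ) * Real.exp (-lam))) := by
  have hA := lim_choose_sub i 1
  have h0 : Tendsto (fun m : ℕ => 1 + (-lam)/(m:ℝ)) atTop (nhds 1) := by
    simpa using tendsto_const_nhds.add (tendsto_const_div_atTop_nhds_zero_nat (-lam))
  have h2 : Tendsto (fun m : ℕ => (1 + (-lam)/(m:ℝ))^m / (1 + (-lam)/(m:ℝ))^i) atTop
      (nhds (Real.exp (-lam) / 1)) :=
    (Real.tendsto_one_add_div_pow_exp (-lam)).div (by simpa using h0.pow i) one_ne_zero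
  have h3 : Tendsto (fun m : ℕ => (1 + (-lam)/(m:ℝ))^(m - i)) atTop (nhds (Real.exp (-lam))) := by
    rw [div_one] at h2
    refine Tendsto.congr' ?_ h2
    filter_upwards [eventually_ge_atTop i, eventually_gt_atTop (Nat.ceil |lam|)] with m hm hml
    have hml' : |lam| < (m:ℝ) := lt_of_le_of_lt (Nat.le_ceil _) (by exact_mod_cast hml)
    have hne : 1 + (-lam)/(m:ℝ) ≠ 0 := by
      have hmpos : (0:ℝ) < (m:ℝ) := lt_of_le_of_lt (abs_nonneg _) hml'
      have : |(-lam)/(m:ℝ)| < 1 := by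
        rw [abs_div, abs_neg, abs_of_pos hmpos, div_lt_one hmpos]; exact hml'
      intro hcontra
      have h5 : (-lam)/(m:ℝ) = -1 := by linarith
      rw [h5] at this; norm_num at this
    rw [pow_sub₀ _ hne hm, div_eq_mul_inv]
  have h4 := h3.comp (tendsto_sub_atTop_nat 1)
  have hB : Tendsto (fun n : ℕ => (1 - lam/((n:ℝ)-1))^(n-1-i)) atTop
      (nhds (Real.exp (-lam))) := by
    refine Tendsto.congr' ?_ h4
    filter_upwards [eventually_ge_atTop 2] with n hn
    simp only [Function.comp]
    rw [Nat.cast_sub (by omega : 1 ≤ n)]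
    push_cast
    rw [show 1 + (-lam)/((n:ℝ)-1) = 1 - lam/((n:ℝ)-1) by ring]
  have hAB := (hA.mul_const (lam^i)).mul hB
  refine Tendsto.congr' ?_ (by convert hAB using 2; ring)
  filter_upwards [eventually_ge_atTop 2] with n hn
  have h2' : (2:ℝ) ≤ (n:ℝ) := by exact_mod_cast hn
  have hm : ((n:ℝ)-1) ≠ 0 := by linarith
  rw [div_pow]
  ring


-- limit of a single P-term
set_option maxHeartbeats 1000000 in
lemma lim_Pterm (t i δ j : ℕ) (hδ1 : 1 ≤ δ) (hδt : δ ≤ t) (hj : j < δ) (hδi : δ ≤ i) :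
    Tendsto (fun n : ℕ =>
      (((n:ℝ) - (ell i δ j : ℝ)) / (n:ℝ)) * Atil t n (ell i δ j) * V n i δ j) atTop (nhds 0) := by
  set l := ell i δ j with hl
  set d := δ - 1 - j with hd
  have hld : l + d = i + j := by simp only [hl, hd, ell]; omega
  by_cases hpar : l % 2 = 0
  case neg =>
    have hzero : (fun n : ℕ =>
        (((n:ℝ) - (ell i δ j : ℝ)) / (n:ℝ)) * Atil t n (ell i δ j) * V n i δ j)
        = fun _ => (0:ℝ) := funext fun n => by simp [Atil, ← hl, hpar]
    rw [hzero]
    exact tendsto_const_nhds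
  case pos =>
    set c1 : ℝ := (Nat.choose l (l - j) : ℝ) with hc1
    have hF1 : Tendsto (fun n : ℕ => ((n.choose l : ℝ)) / (n:ℝ)^l) atTop
        (nhds (1 / (l.factorial : ℝ))) := lim_choose l
    have hF2 : Tendsto (fun n : ℕ => (((n - (l+1)).choose d : ℝ)) / ((n:ℝ) - (l+1))^d) atTop
        (nhds (1 / (d.factorial : ℝ))) := by
      have h := lim_choose_sub d (l+1); push_cast at h; exact h
    have hF3 : Tendsto (fun n : ℕ => ((n:ℝ) - 1)^i / (((n - 1).choose i : ℝ))) atTop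
        (nhds ((1 / (i.factorial : ℝ))⁻¹)) := by
      have := (lim_choose_sub i 1).inv₀ (by positivity)
      refine Tendsto.congr (fun n => ?_) this
      rw [inv_div]; norm_num
    have hF4 : Tendsto (fun n : ℕ => (((n:ℝ) - (l+1)) / (n:ℝ))^d) atTop (nhds 1) := by
      have hbase : Tendsto (fun n : ℕ => 1 - ((l:ℝ)+1) / (n:ℝ)) atTop (nhds 1) := by
        simpa using tendsto_const_nhds.sub (tendsto_const_div_atTop_nhds_zero_nat ((l:ℝ)+1))
      have := hbase.pow d
      rw [one_pow] at this
      refine Tendsto.congr' ?_ this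
      filter_upwards [eventually_gt_atTop 0] with n hn
      have hn0 : ((n:ℝ)) ≠ 0 := by positivity
      congr 1
      field_simp
    have hF5 : Tendsto (fun n : ℕ => ((n:ℝ) - (l:ℝ)) / (n:ℝ)) atTop (nhds 1) := by
      have hbase : Tendsto (fun n : ℕ => 1 - (l:ℝ) / (n:ℝ)) atTop (nhds 1) := by
        simpa using tendsto_const_nhds.sub (tendsto_const_div_atTop_nhds_zero_nat (l:ℝ))
      refine Tendsto.congr' ?_ hbase
      filter_upwards [eventually_gt_atTop 0] with n hn
      have hn0 : ((n:ℝ)) ≠ 0 := by positivity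
      field_simp
    have hF6 : Tendsto (fun n : ℕ => (n:ℝ)^(l + d) / (((n:ℝ)+1)^t * ((n:ℝ)-1)^i)) atTop
        (nhds 0) := by
      apply lim_pow0
      omega
    have hG : Tendsto (fun n : ℕ =>
        c1 * (((n.choose l : ℝ)) / (n:ℝ)^l) * ((((n - (l+1)).choose d : ℝ)) / ((n:ℝ) - (l+1))^d)
          * (((n:ℝ) - 1)^i / (((n - 1).choose i : ℝ))) * ((((n:ℝ) - (l+1)) / (n:ℝ))^d)
          * (((n:ℝ) - (l:ℝ)) / (n:ℝ))
          * ((n:ℝ)^(l + d) / (((n:ℝ)+1)^t * ((n:ℝ)-1)^i))) atTop (nhds 0) := by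
      have := ((((((tendsto_const_nhds : Tendsto (fun _ : ℕ => c1) atTop (nhds c1)).mul
        hF1).mul hF2).mul hF3).mul hF4).mul hF5).mul hF6
      simpa using this
    refine Tendsto.congr' ?_ hG
    filter_upwards [eventually_ge_atTop (i + 2*t + 5)] with n hn
    have hli : l ≤ i + t := by simp only [hl, ell]; omega
    have hlt : (l:ℝ) ≤ (i:ℝ) + t := by exact_mod_cast hli
    have hn5 : (i + 2*t + 5 : ℝ) ≤ (n:ℝ) := by exact_mod_cast hn
    have h0 : (0:ℝ) ≤ (i:ℝ) := Nat.cast_nonneg i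
    have h0t : (0:ℝ) ≤ (t:ℝ) := Nat.cast_nonneg t
    have hx0 : ((n:ℝ)) ≠ 0 := by linarith
    have hx1 : ((n:ℝ)+1) ≠ 0 := by linarith
    have hxm : ((n:ℝ)-1) ≠ 0 := by linarith
    have hxl : ((n:ℝ) - ((l:ℝ)+1)) ≠ 0 := by linarith
    have hchoosepos : (0:ℝ) < ((n - 1).choose i : ℝ) := by
      exact_mod_cast Nat.choose_pos (by omega : i ≤ n - 1)
    have hsub : n - l - 1 = n - (l + 1) := by omega
    simp only [Atil, hpar, Ahat, V, hsub, ← hc1, ← hl, ← hd, ↓reduceIte, div_pow]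
    rw [zpow_neg, zpow_natCast]
    rw [pow_add ((n:ℝ)) l d]
    have hxlp : ((n:ℝ))^l ≠ 0 := by positivity
    have hxdp : ((n:ℝ) - ((l:ℝ)+1))^d ≠ 0 := pow_ne_zero _ hxl
    field_simp

set_option maxHeartbeats 1000000 in
lemma lim_Qterm (t i δ j : ℕ) (ρ : ℝ) (ht : 3 ≤ t) (htodd : Odd t)
    (hδ1 : 1 ≤ δ) (hδt : δ ≤ t) (hj : j < δ) (hti : t + 2 ≤ i) :
    Tendsto (fun n : ℕ => ((n:ℝ) - 1 - ρ) *
      ((((ell i δ j : ℕ):ℝ) + 1) / (n:ℝ) * Atil t n (ell i δ j + 1) * V n i δ j)) atTop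
      (nhds (if δ = t ∧ j = t - 1 ∧ Odd i then (1/(((t-1).factorial):ℝ)) else 0)) := by
  set l := ell i δ j with hl
  set d := δ - 1 - j with hd
  have hδi : δ ≤ i := by omega
  have hld : l + d = i + j := by simp only [hl, hd, ell]; omega
  have hli : l = i - δ + 2*j + 1 := by simp only [hl, ell]
  by_cases hpar : (l + 1) % 2 = 0
  case neg =>
    have hcond : ¬(δ = t ∧ j = t - 1 ∧ Odd i) := by
      rintro ⟨rfl, rfl, hoi⟩
      apply hpar
      obtain ⟨a, ha⟩ := hoi
      obtain ⟨b, hb⟩ := htodd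
      omega
    rw [if_neg hcond]
    have hzero : (fun n : ℕ => ((n:ℝ) - 1 - ρ) *
        ((((ell i δ j : ℕ):ℝ) + 1) / (n:ℝ) * Atil t n (ell i δ j + 1) * V n i δ j))
        = fun _ => (0:ℝ) := funext fun n => by simp [Atil, ← hl, hpar]
    rw [hzero]
    exact tendsto_const_nhds
  case pos =>
    set c1 : ℝ := (Nat.choose l (l - j) : ℝ) with hc1
    -- the factored function
    set G : ℕ → ℝ := fun n =>
      c1 * ((l:ℝ)+1) * ((n.choose (l+1) : ℝ) / (n:ℝ)^(l+1))
        * (((n - (l+1)).choose d : ℝ) / ((n:ℝ) - ((l:ℝ)+1))^d)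
        * (((n:ℝ) - 1)^i / (((n - 1).choose i : ℝ)))
        * ((((n:ℝ) - ((l:ℝ)+1)) / (n:ℝ))^d)
        * (((n:ℝ) - 1 - ρ) / (n:ℝ))
        * ((n:ℝ)^(l+1+d) / (((n:ℝ)+1)^t * ((n:ℝ)-1)^i)) with hG
    have heq : (fun n : ℕ => ((n:ℝ) - 1 - ρ) *
        ((((ell i δ j : ℕ):ℝ) + 1) / (n:ℝ) * Atil t n (ell i δ j + 1) * V n i δ j))
        =ᶠ[atTop] G := by
      filter_upwards [eventually_ge_atTop (i + 2*t + 5)] with n hn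
      have hlit : l ≤ i + t := by omega
      have hlt : (l:ℝ) ≤ (i:ℝ) + t := by exact_mod_cast hlit
      have hn5 : (i + 2*t + 5 : ℝ) ≤ (n:ℝ) := by exact_mod_cast hn
      have h0 : (0:ℝ) ≤ (i:ℝ) := Nat.cast_nonneg i
      have h0t : (0:ℝ) ≤ (t:ℝ) := Nat.cast_nonneg t
      have hx0 : ((n:ℝ)) ≠ 0 := by linarith
      have hx1 : ((n:ℝ)+1) ≠ 0 := by linarith
      have hxm : ((n:ℝ)-1) ≠ 0 := by linarith
      have hxl : ((n:ℝ) - ((l:ℝ)+1)) ≠ 0 := by linarith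
      have hchoosepos : (0:ℝ) < ((n - 1).choose i : ℝ) := by
        exact_mod_cast Nat.choose_pos (by omega : i ≤ n - 1)
      have hsub : n - l - 1 = n - (l + 1) := by omega
      simp only [hG, Atil, hpar, Ahat, V, hsub, ← hc1, ← hl, ← hd, ↓reduceIte, div_pow]
      rw [zpow_neg, zpow_natCast]
      rw [pow_add ((n:ℝ)) (l+1) d]
      have hxlp : ((n:ℝ))^(l+1) ≠ 0 := by positivity
      have hxdp : ((n:ℝ) - ((l:ℝ)+1))^d ≠ 0 := pow_ne_zero _ hxl
      push_cast
      field_simp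
    have hF1 : Tendsto (fun n : ℕ => ((n.choose (l+1) : ℝ)) / (n:ℝ)^(l+1)) atTop
        (nhds (1 / ((l+1).factorial : ℝ))) := lim_choose (l+1)
    have hF2 : Tendsto (fun n : ℕ => (((n - (l+1)).choose d : ℝ)) / ((n:ℝ) - ((l:ℝ)+1))^d) atTop
        (nhds (1 / (d.factorial : ℝ))) := by
      have h := lim_choose_sub d (l+1); push_cast at h; exact h
    have hF3 : Tendsto (fun n : ℕ => ((n:ℝ) - 1)^i / (((n - 1).choose i : ℝ))) atTop
        (nhds ((1 / (i.factorial : ℝ))⁻¹)) := by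
      have := (lim_choose_sub i 1).inv₀ (by positivity)
      refine Tendsto.congr (fun n => ?_) this
      rw [inv_div]; norm_num
    have hF4 : Tendsto (fun n : ℕ => (((n:ℝ) - ((l:ℝ)+1)) / (n:ℝ))^d) atTop (nhds 1) := by
      have hbase : Tendsto (fun n : ℕ => 1 - ((l:ℝ)+1) / (n:ℝ)) atTop (nhds 1) := by
        simpa using tendsto_const_nhds.sub (tendsto_const_div_atTop_nhds_zero_nat ((l:ℝ)+1))
      have := hbase.pow d
      rw [one_pow] at this
      refine Tendsto.congr' ?_ this
      filter_upwards [eventually_gt_atTop 0] with n hn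
      have hn0 : ((n:ℝ)) ≠ 0 := by positivity
      congr 1
      field_simp
    have hF5 : Tendsto (fun n : ℕ => ((n:ℝ) - 1 - ρ) / (n:ℝ)) atTop (nhds 1) := by
      have hbase : Tendsto (fun n : ℕ => 1 - (1+ρ) / (n:ℝ)) atTop (nhds 1) := by
        simpa using tendsto_const_nhds.sub (tendsto_const_div_atTop_nhds_zero_nat (1+ρ))
      refine Tendsto.congr' ?_ hbase
      filter_upwards [eventually_gt_atTop 0] with n hn
      have hn0 : ((n:ℝ)) ≠ 0 := by positivity
      field_simp
      ring
    by_cases hsurv : j + 1 = t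
    case pos =>
      have hδe : δ = t := by omega
      have hje : j = t - 1 := by omega
      have h7 : l + 1 = i + t := by omega
      have hoi : Odd i := by
        obtain ⟨b, hb⟩ := htodd
        exact Nat.odd_iff.mpr (by omega)
      rw [if_pos ⟨hδe, hje, hoi⟩]
      have hF6 : Tendsto (fun n : ℕ => (n:ℝ)^(l+1+d) / (((n:ℝ)+1)^t * ((n:ℝ)-1)^i)) atTop
          (nhds 1) := by
        have h := lim_pow1 t i
        rw [show t + i = l + 1 + d by omega] at h
        exact h
      have hGlim : Tendsto G atTop (nhds
          (c1 * ((l:ℝ)+1) * (1 / ((l+1).factorial : ℝ)) * (1 / (d.factorial : ℝ))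
            * ((1 / (i.factorial : ℝ))⁻¹) * 1 * 1 * 1)) := by
        exact (((((((tendsto_const_nhds : Tendsto (fun _ : ℕ => c1 * ((l:ℝ)+1)) atTop
          (nhds (c1 * ((l:ℝ)+1)))).mul hF1).mul hF2).mul hF3).mul hF4).mul hF5).mul hF6).congr
          (fun n => by rw [hG])
      refine Tendsto.congr' heq.symm ?_
      convert hGlim using 1
      -- value computation
      have hd0 : d = 0 := by omega
      have hle : l = i + t - 1 := by omega
      have hlj : l - j = i := by omega
      have hcast : (Nat.choose l (l-j) : ℝ) = ((i+t-1).factorial : ℝ) /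
          ((i.factorial : ℝ) * ((t-1).factorial : ℝ)) := by
        rw [hlj, hle]
        rw [Nat.cast_choose ℝ (by omega : i ≤ i + t - 1),
          show i + t - 1 - i = t - 1 from by omega]
      have hfac : (((l+1)).factorial : ℝ) = ((l:ℝ)+1) * ((i+t-1).factorial : ℝ) := by
        rw [Nat.factorial_succ, hle]
        push_cast
        ring
      have hfp : (0:ℝ) < ((i+t-1).factorial : ℝ) := by exact_mod_cast (i+t-1).factorial_pos
      have hfp2 : (0:ℝ) < ((t-1).factorial : ℝ) := by exact_mod_cast (t-1).factorial_pos
      have hfp3 : (0:ℝ) < ((i).factorial : ℝ) := by exact_mod_cast (i).factorial_pos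
      have hlp : (0:ℝ) < (l:ℝ)+1 := by positivity
      rw [hc1, hcast, hfac, hd0]
      simp only [Nat.factorial_zero, Nat.cast_one]
      field_simp
    case neg =>
      rw [if_neg (by rintro ⟨rfl, rfl, _⟩; omega)]
      have hF6 : Tendsto (fun n : ℕ => (n:ℝ)^(l+1+d) / (((n:ℝ)+1)^t * ((n:ℝ)-1)^i)) atTop
          (nhds 0) := by
        apply lim_pow0
        omega
      have hGlim : Tendsto G atTop (nhds
          (c1 * ((l:ℝ)+1) * (1 / ((l+1).factorial : ℝ)) * (1 / (d.factorial : ℝ))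
            * ((1 / (i.factorial : ℝ))⁻¹) * 1 * 1 * 0)) := by
        exact (((((((tendsto_const_nhds : Tendsto (fun _ : ℕ => c1 * ((l:ℝ)+1)) atTop
          (nhds (c1 * ((l:ℝ)+1)))).mul hF1).mul hF2).mul hF3).mul hF4).mul hF5).mul hF6).congr
          (fun n => by rw [hG])
      refine Tendsto.congr' heq.symm ?_
      simpa using hGlim


lemma lim_P (t i : ℕ) :
    Tendsto (fun n : ℕ => Ptil t n i) atTop (nhds (if t ≤ i then 1 else 0)) := by
  by_cases hit : i < t
  case pos =>
    rw [if_neg (by omega)]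
    have h : (fun n : ℕ => Ptil t n i) = fun _ => (0:ℝ) := funext fun n => by simp [Ptil, hit]
    rw [h]; exact tendsto_const_nhds
  case neg =>
    rw [if_pos (by omega)]
    have hS : Tendsto (fun n : ℕ => ∑ δ ∈ Icc 1 t, ∑ j ∈ range δ,
        (((n : ℝ) - (ell i δ j : ℝ)) / (n : ℝ)) * Atil t n (ell i δ j) * V n i δ j) atTop
        (nhds 0) := by
      have := tendsto_finset_sum (Icc 1 t) (fun δ hδ => tendsto_finset_sum (range δ)
        (fun j hj => lim_Pterm t i δ j (mem_Icc.mp hδ).1 (mem_Icc.mp hδ).2 (mem_range.mp hj)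
          (le_trans (mem_Icc.mp hδ).2 (by omega))))
      simpa using this
    have h1 : Tendsto (fun n : ℕ => 1 - ∑ δ ∈ Icc 1 t, ∑ j ∈ range δ,
        (((n : ℝ) - (ell i δ j : ℝ)) / (n : ℝ)) * Atil t n (ell i δ j) * V n i δ j) atTop
        (nhds 1) := by
      simpa using tendsto_const_nhds.sub hS
    refine Tendsto.congr' ?_ h1
    filter_upwards [eventually_ge_atTop (i + t + 3)] with n hn
    rw [Ptil, if_neg hit, if_pos (by omega)]

lemma lim_Q (t i : ℕ) (ρ : ℝ) (ht : 3 ≤ t) (htodd : Odd t) :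
    Tendsto (fun n : ℕ => ((n:ℝ) - 1 - ρ) * Qtil t n i) atTop
      (nhds (if t + 2 ≤ i ∧ Odd i then (1/(((t-1).factorial):ℝ)) else 0)) := by
  by_cases hit : i ≤ t + 1
  case pos =>
    rw [if_neg (by omega)]
    have h : (fun n : ℕ => ((n:ℝ) - 1 - ρ) * Qtil t n i) = fun _ => (0:ℝ) :=
      funext fun n => by simp [Qtil, hit]
    rw [h]; exact tendsto_const_nhds
  case neg =>
    have hti : t + 2 ≤ i := by omega
    have hS : Tendsto (fun n : ℕ => ∑ δ ∈ Icc 1 t, ∑ j ∈ range δ, ((n:ℝ) - 1 - ρ) *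
        ((((ell i δ j : ℕ):ℝ) + 1) / (n:ℝ) * Atil t n (ell i δ j + 1) * V n i δ j)) atTop
        (nhds (∑ δ ∈ Icc 1 t, ∑ j ∈ range δ,
          (if δ = t ∧ j = t - 1 ∧ Odd i then (1/(((t-1).factorial):ℝ)) else 0))) :=
      tendsto_finset_sum (Icc 1 t) (fun δ hδ => tendsto_finset_sum (range δ)
        (fun j hj => lim_Qterm t i δ j ρ ht htodd (mem_Icc.mp hδ).1 (mem_Icc.mp hδ).2
          (mem_range.mp hj) hti))
    have hval : (∑ δ ∈ Icc 1 t, ∑ j ∈ range δ,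
        (if δ = t ∧ j = t - 1 ∧ Odd i then (1/(((t-1).factorial):ℝ)) else 0))
        = if t + 2 ≤ i ∧ Odd i then (1/(((t-1).factorial):ℝ)) else 0 := by
      by_cases hoi : Odd i
      case neg => simp [hoi]
      case pos =>
        rw [if_pos ⟨hti, hoi⟩]
        have hinner : ∀ δ ∈ Icc 1 t, (∑ j ∈ range δ,
            (if δ = t ∧ j = t - 1 ∧ Odd i then (1/(((t-1).factorial):ℝ)) else 0))
            = if δ = t then (1/(((t-1).factorial):ℝ)) else 0 := by
          intro δ hδ
          by_cases hδ2 : δ = t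
          case pos =>
            subst hδ2
            rw [if_pos rfl]
            have : ∀ j ∈ range δ, (if δ = δ ∧ j = δ - 1 ∧ Odd i
                then (1/(((δ-1).factorial):ℝ)) else 0)
                = if j = δ - 1 then (1/(((δ-1).factorial):ℝ)) else 0 := by
              intro j hj
              by_cases hje : j = δ - 1 <;> simp [hje, hoi]
            rw [sum_congr rfl this, sum_ite_eq' (range δ) (δ - 1)]
            rw [if_pos (mem_range.mpr (by omega))]
          case neg => simp [hδ2]
        rw [sum_congr rfl hinner, sum_ite_eq' (Icc 1 t) t]
        rw [if_pos (mem_Icc.mpr ⟨by omega, le_refl t⟩)]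
    rw [← hval]
    refine Tendsto.congr' ?_ hS
    filter_upwards [eventually_ge_atTop 1] with n hn
    rw [Qtil, if_neg hit, mul_sum]
    refine sum_congr rfl fun δ hδ => ?_
    rw [mul_sum]

noncomputable def Bfn (t : ℕ) (ρ : ℝ) (n i : ℕ) : ℝ :=
  ρ * Ptil t n i + ((n:ℝ) - 1 - ρ) * Qtil t n i

noncomputable def Ffn (t : ℕ) (lam ρ : ℝ) (n i : ℕ) : ℝ :=
  if i < n then ((n - 1).choose i : ℝ) * (lam/((n:ℝ)-1))^i *
    (1 - lam/((n:ℝ)-1))^(n-1-i) * Bfn t ρ n i else 0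

noncomputable def alim (t : ℕ) (lam ρ : ℝ) (i : ℕ) : ℝ :=
  lam^i / (i.factorial : ℝ) * Real.exp (-lam) *
    (ρ * (if t ≤ i then 1 else 0) +
      (if t + 2 ≤ i ∧ Odd i then 1/(((t-1).factorial):ℝ) else 0))

lemma lim_F (t i : ℕ) (ht : 3 ≤ t) (htodd : Odd t) (lam ρ : ℝ) :
    Tendsto (fun n : ℕ => Ffn t lam ρ n i) atTop (nhds (alim t lam ρ i)) := by
  have hB : Tendsto (fun n : ℕ => Bfn t ρ n i) atTop
      (nhds (ρ * (if t ≤ i then 1 else 0) +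
        (if t + 2 ≤ i ∧ Odd i then 1/(((t-1).factorial):ℝ) else 0))) := by
    exact ((lim_P t i).const_mul ρ).add (lim_Q t i ρ ht htodd)
  have h := (lim_pmf lam i).mul hB
  refine Tendsto.congr' ?_ h
  filter_upwards [eventually_gt_atTop i] with n hn
  rw [Ffn, if_pos hn]

lemma choose_le_two_pow' (a b : ℕ) : a.choose b ≤ 2^a := by
  rcases le_or_gt b a with h | h
  · calc a.choose b ≤ ∑ m ∈ range (a+1), a.choose m :=
        single_le_sum (fun m _ => Nat.zero_le _) (mem_range.mpr (by omega))
      _ = 2^a := Nat.sum_range_choose a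
  · rw [Nat.choose_eq_zero_of_lt h]; exact Nat.zero_le _

set_option maxHeartbeats 1000000 in
lemma key_P (t n i δ j : ℕ) (lam : ℝ) (hlam : 0 ≤ lam) (hlamn : lam ≤ (n:ℝ) - 1)
    (hn2 : 2 ≤ n) (hδ1 : 1 ≤ δ) (hδt : δ ≤ t) (hj : j < δ) (hti : t ≤ i)
    (hin : i ≤ n - t - 2) (ht3 : 3 ≤ t) :
    ((n - 1).choose i : ℝ) * (lam/((n:ℝ)-1))^i * (1 - lam/((n:ℝ)-1))^(n-1-i) *
      ((((n:ℝ) - (ell i δ j : ℝ)) / (n:ℝ)) * Atil t n (ell i δ j) * V n i δ j)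
      ≤ (4*lam)^i * 4^t / (((i+1-t).factorial : ℝ)) := by
  set l := ell i δ j with hl
  set d := δ - 1 - j with hd
  have hli : l = i - δ + 2*j + 1 := by simp only [hl, ell]
  have hne : t + i + 2 ≤ n := by omega
  have hl_le : l ≤ i + t - 1 := by omega
  have hl_ge : i + 1 - t ≤ l := by omega
  have hld : l + d = i + j := by omega
  have hln : l + 3 ≤ n := by omega
  have hn1R : (1:ℝ) ≤ (n:ℝ) - 1 := by
    have : (2:ℝ) ≤ (n:ℝ) := by exact_mod_cast hn2
    linarith
  have hn0 : (0:ℝ) < (n:ℝ) := by linarith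
  have hnm : (0:ℝ) < (n:ℝ) - 1 := by linarith
  have hlR : (l:ℝ) ≤ (n:ℝ) := by exact_mod_cast (by omega : l ≤ n)
  set x := lam/((n:ℝ)-1) with hx
  have hx0 : 0 ≤ x := div_nonneg hlam (le_of_lt hnm)
  have hx1 : x ≤ 1 := by rw [hx, div_le_one hnm]; exact hlamn
  have hCni : (0:ℝ) < ((n - 1).choose i : ℝ) := by
    exact_mod_cast Nat.choose_pos (by omega : i ≤ n - 1)
  set c1 : ℝ := (Nat.choose l (l - j) : ℝ) with hc1
  set Cd : ℝ := (Nat.choose (n - l - 1) d : ℝ) with hCd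
  have hc10 : 0 ≤ c1 := by positivity
  have hCd0 : 0 ≤ Cd := by positivity
  have hAhat0 : 0 ≤ Ahat t n l := by
    rw [Ahat]; positivity
  have hAt : Atil t n l ≤ Ahat t n l := by
    rw [Atil]; split
    · exact le_refl _
    · exact hAhat0
  have hAt0 : 0 ≤ Atil t n l := by
    rw [Atil]; split
    · exact hAhat0
    · exact le_refl _
  have hxle : 0 ≤ 1 - x := by linarith
  have hk0 : 0 ≤ (1 - x)^(n-1-i) := pow_nonneg hxle _
  have hk1 : (1 - x)^(n-1-i) ≤ 1 := pow_le_one₀ hxle (by linarith)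
  have hnl0 : 0 ≤ ((n:ℝ) - (l:ℝ))/(n:ℝ) := div_nonneg (by linarith) hn0.le
  have hnl1 : ((n:ℝ) - (l:ℝ))/(n:ℝ) ≤ 1 := by rw [div_le_one hn0]; linarith
  have hVe : V n i δ j = c1 * Cd / (((n - 1).choose i : ℝ)) := rfl
  have hxp : x^i = lam^i/((n:ℝ)-1)^i := div_pow lam _ i
  have hzp : ((n:ℝ)+1)^(-(t:ℤ)) ≤ 1/((n:ℝ)-1)^t := by
    rw [zpow_neg, zpow_natCast, one_div]
    apply inv_anti₀ (by positivity)
    apply pow_le_pow_left₀ (by linarith) (by linarith)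
  have hzp0 : (0:ℝ) ≤ ((n:ℝ)+1)^(-(t:ℤ)) := by positivity
  have hcl : (n.choose l : ℝ) ≤ 2^l * ((n:ℝ)-1)^l/(l.factorial:ℝ) := by
    calc (n.choose l : ℝ) ≤ (n:ℝ)^l / (l.factorial:ℝ) := Nat.choose_le_pow_div l n
      _ ≤ (2*((n:ℝ)-1))^l / (l.factorial:ℝ) := by
          gcongr <;> linarith
      _ = 2^l * ((n:ℝ)-1)^l/(l.factorial:ℝ) := by rw [mul_pow]
  have hc1b : c1 ≤ (2:ℝ)^l := by
    rw [hc1]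
    exact_mod_cast Nat.cast_le.mpr (choose_le_two_pow' l (l-j))
  have hcastnl : ((n-l-1 : ℕ):ℝ) ≤ (n:ℝ)-1 := by
    rw [show (n:ℝ) - 1 = ((n-1:ℕ):ℝ) by rw [Nat.cast_sub (by omega)]; norm_num]
    exact_mod_cast Nat.cast_le.mpr (by omega : n - l - 1 ≤ n - 1)
  have hCdb : Cd ≤ ((n:ℝ)-1)^d := by
    calc Cd ≤ ((n-l-1:ℕ):ℝ)^d / (d.factorial:ℝ) := Nat.choose_le_pow_div d (n-l-1)
      _ ≤ ((n-l-1:ℕ):ℝ)^d := by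
          apply div_le_self (by positivity)
          exact_mod_cast Nat.one_le_cast.mpr d.factorial_pos
      _ ≤ (((n:ℝ)-1))^d := pow_le_pow_left₀ (by positivity) hcastnl d
  -- main chain
  calc ((n - 1).choose i : ℝ) * x^i * (1-x)^(n-1-i) *
      ((((n:ℝ) - (l:ℝ))/(n:ℝ)) * Atil t n l * V n i δ j)
      = x^i * ((1-x)^(n-1-i) * (((n:ℝ)-(l:ℝ))/(n:ℝ)) * Atil t n l) * (c1 * Cd) := by
        rw [hVe]; field_simp
    _ ≤ x^i * (1 * 1 * Ahat t n l) * (c1 * Cd) := by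
        have hb1 : (1-x)^(n-1-i) * (((n:ℝ)-(l:ℝ))/(n:ℝ)) * Atil t n l ≤ 1 * 1 * Ahat t n l :=
          mul_le_mul (mul_le_mul hk1 hnl1 hnl0 zero_le_one) hAt hAt0 (by norm_num)
        exact mul_le_mul_of_nonneg_right (mul_le_mul_of_nonneg_left hb1 (pow_nonneg hx0 i))
          (mul_nonneg hc10 hCd0)
    _ = x^i * (((n:ℝ)+1)^(-(t:ℤ)) * (n.choose l : ℝ)) * (c1 * Cd) := by rw [Ahat]; ring
    _ ≤ (lam^i/((n:ℝ)-1)^i) * ((1/((n:ℝ)-1)^t) * (2^l * ((n:ℝ)-1)^l/(l.factorial:ℝ))) *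
        ((2:ℝ)^l * ((n:ℝ)-1)^d) := by
        rw [hxp]
        apply mul_le_mul
        · apply mul_le_mul_of_nonneg_left _ (by positivity)
          exact mul_le_mul hzp hcl (by positivity) (by positivity)
        · exact mul_le_mul hc1b hCdb hCd0 (by positivity)
        · exact mul_nonneg hc10 hCd0
        · positivity
    _ = lam^i * 4^l * ((n:ℝ)-1)^(l+d) / (((n:ℝ)-1)^(i+t) * (l.factorial:ℝ)) := by
        rw [pow_add ((n:ℝ)-1) i t, pow_add ((n:ℝ)-1) l d,
          show (4:ℝ)^l = 2^l*2^l by rw [← mul_pow]; norm_num]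
        have hf : ((l.factorial:ℝ)) ≠ 0 := by positivity
        field_simp
    _ ≤ lam^i * 4^l * ((n:ℝ)-1)^(i+t) / (((n:ℝ)-1)^(i+t) * (l.factorial:ℝ)) := by
        gcongr lam^i * 4^l * ?_ / (((n:ℝ)-1)^(i+t) * (l.factorial:ℝ))
        exact pow_le_pow_right₀ hn1R (by rw [hld]; omega)
    _ = lam^i * 4^l / (l.factorial:ℝ) := by
        have h1 : (((n:ℝ)-1))^(i+t) ≠ 0 := by positivity
        have hf : ((l.factorial:ℝ)) ≠ 0 := by positivity
        field_simp
    _ ≤ lam^i * 4^(i+t) / (((i+1-t).factorial:ℝ)) := by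
        have hlit : l ≤ i + t := by omega
        refine div_le_div₀ (by positivity) ?_ (by positivity) ?_
        · exact mul_le_mul_of_nonneg_left (pow_le_pow_right₀ (by norm_num) hlit)
            (pow_nonneg hlam i)
        · exact_mod_cast Nat.cast_le.mpr (Nat.factorial_le hl_ge)
    _ = (4*lam)^i * 4^t / (((i+1-t).factorial:ℝ)) := by
        rw [mul_pow, pow_add]
        ring

set_option maxHeartbeats 1000000 in
lemma key_Q (t n i δ j : ℕ) (lam ρ : ℝ) (hlam : 0 ≤ lam) (hρ : 0 ≤ ρ)
    (hlamn : lam ≤ (n:ℝ) - 1) (hρn : ρ ≤ (n:ℝ) - 1)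
    (hn2 : 2 ≤ n) (hδ1 : 1 ≤ δ) (hδt : δ ≤ t) (hj : j < δ) (hti : t + 2 ≤ i)
    (hin : i < n) (ht3 : 3 ≤ t) :
    ((n:ℝ)-1-ρ) * (((n - 1).choose i : ℝ) * (lam/((n:ℝ)-1))^i * (1 - lam/((n:ℝ)-1))^(n-1-i) *
      ((((ell i δ j : ℕ):ℝ) + 1) / (n:ℝ) * Atil t n (ell i δ j + 1) * V n i δ j))
      ≤ ((i:ℝ) + 2*(t:ℝ) + 1) * ((4*lam)^i * 4^(t+1) / (((i+1-t).factorial : ℝ))) := by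
  set l := ell i δ j with hl
  set d := δ - 1 - j with hd
  have hli : l = i - δ + 2*j + 1 := by simp only [hl, ell]
  have hl_le : l ≤ i + t - 1 := by omega
  have hl_ge : i + 1 - t ≤ l + 1 := by omega
  have hld : l + 1 + d = i + j + 1 := by omega
  have hn1R : (1:ℝ) ≤ (n:ℝ) - 1 := by
    have : (2:ℝ) ≤ (n:ℝ) := by exact_mod_cast hn2
    linarith
  have hn0 : (0:ℝ) < (n:ℝ) := by linarith
  have hnm : (0:ℝ) < (n:ℝ) - 1 := by linarith
  set x := lam/((n:ℝ)-1) with hx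
  have hx0 : 0 ≤ x := div_nonneg hlam (le_of_lt hnm)
  have hx1 : x ≤ 1 := by rw [hx, div_le_one hnm]; exact hlamn
  have hCni : (0:ℝ) < ((n - 1).choose i : ℝ) := by
    exact_mod_cast Nat.choose_pos (by omega : i ≤ n - 1)
  set c1 : ℝ := (Nat.choose l (l - j) : ℝ) with hc1
  set Cd : ℝ := (Nat.choose (n - l - 1) d : ℝ) with hCd
  have hc10 : 0 ≤ c1 := by positivity
  have hCd0 : 0 ≤ Cd := by positivity
  have hAhat0 : 0 ≤ Ahat t n (l+1) := by rw [Ahat]; positivity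
  have hAt : Atil t n (l+1) ≤ Ahat t n (l+1) := by
    rw [Atil]; split
    · exact le_refl _
    · exact hAhat0
  have hAt0 : 0 ≤ Atil t n (l+1) := by
    rw [Atil]; split
    · exact hAhat0
    · exact le_refl _
  have hxle : 0 ≤ 1 - x := by linarith
  have hk0 : 0 ≤ (1 - x)^(n-1-i) := pow_nonneg hxle _
  have hk1 : (1 - x)^(n-1-i) ≤ 1 := pow_le_one₀ hxle (by linarith)
  have hVe : V n i δ j = c1 * Cd / (((n - 1).choose i : ℝ)) := rfl
  have hxp : x^i = lam^i/((n:ℝ)-1)^i := div_pow lam _ i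
  have hzp : ((n:ℝ)+1)^(-(t:ℤ)) ≤ 1/((n:ℝ)-1)^t := by
    rw [zpow_neg, zpow_natCast, one_div]
    apply inv_anti₀ (by positivity)
    apply pow_le_pow_left₀ (by linarith) (by linarith)
  have hzp0 : (0:ℝ) ≤ ((n:ℝ)+1)^(-(t:ℤ)) := by positivity
  have hcl : (n.choose (l+1) : ℝ) ≤ 2^(l+1) * ((n:ℝ)-1)^(l+1)/(((l+1).factorial:ℝ)) := by
    calc (n.choose (l+1) : ℝ) ≤ (n:ℝ)^(l+1) / (((l+1).factorial:ℝ)) :=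
        Nat.choose_le_pow_div (l+1) n
      _ ≤ (2*((n:ℝ)-1))^(l+1) / (((l+1).factorial:ℝ)) := by gcongr <;> linarith
      _ = 2^(l+1) * ((n:ℝ)-1)^(l+1)/(((l+1).factorial:ℝ)) := by rw [mul_pow]
  have hc1b : c1 ≤ (2:ℝ)^(l+1) := by
    rw [hc1]
    calc ((l.choose (l-j) : ℕ):ℝ) ≤ ((2^l : ℕ):ℝ) :=
        Nat.cast_le.mpr (choose_le_two_pow' l (l-j))
      _ = (2:ℝ)^l := by push_cast; ring
      _ ≤ (2:ℝ)^(l+1) := pow_le_pow_right₀ (by norm_num) (by omega)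
  have hcastnl : ((n-l-1 : ℕ):ℝ) ≤ (n:ℝ)-1 := by
    rw [show (n:ℝ) - 1 = ((n-1:ℕ):ℝ) by rw [Nat.cast_sub (by omega)]; norm_num]
    exact_mod_cast Nat.cast_le.mpr (by omega : n - l - 1 ≤ n - 1)
  have hCdb : Cd ≤ ((n:ℝ)-1)^d := by
    calc Cd ≤ ((n-l-1:ℕ):ℝ)^d / (d.factorial:ℝ) := Nat.choose_le_pow_div d (n-l-1)
      _ ≤ ((n-l-1:ℕ):ℝ)^d := by
          apply div_le_self (by positivity)
          exact_mod_cast Nat.one_le_cast.mpr d.factorial_pos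
      _ ≤ (((n:ℝ)-1))^d := pow_le_pow_left₀ (by positivity) hcastnl d
  have hpre : ((n:ℝ)-1-ρ) * (((l:ℝ)+1)/(n:ℝ)) ≤ (i:ℝ) + 2*(t:ℝ) + 1 := by
    have h1 : ((n:ℝ)-1-ρ) * (((l:ℝ)+1)/(n:ℝ)) ≤ 1 * ((l:ℝ)+1) := by
      rw [mul_comm, div_mul_eq_mul_div, div_le_iff₀ hn0, one_mul]
      have hll : (0:ℝ) ≤ (l:ℝ)+1 := by positivity
      nlinarith
    have h2 : (l:ℝ) ≤ (i:ℝ) + 2*(t:ℝ) := by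
      have : (l:ℕ) ≤ i + 2*t := by omega
      exact_mod_cast le_trans (Nat.cast_le.mpr this) (by push_cast; linarith)
    linarith
  have hpre0 : (0:ℝ) ≤ ((n:ℝ)-1-ρ) * (((l:ℝ)+1)/(n:ℝ)) := by
    apply mul_nonneg (by linarith) (by positivity)
  have hmain : x^i * (1-x)^(n-1-i) * Atil t n (l+1) * (c1 * Cd)
      ≤ (4*lam)^i * 4^(t+1) / (((i+1-t).factorial : ℝ)) := by
    calc x^i * (1-x)^(n-1-i) * Atil t n (l+1) * (c1 * Cd)
        ≤ x^i * 1 * Ahat t n (l+1) * (c1 * Cd) := by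
          apply mul_le_mul_of_nonneg_right _ (mul_nonneg hc10 hCd0)
          exact mul_le_mul (mul_le_mul_of_nonneg_left hk1 (pow_nonneg hx0 i)) hAt hAt0
            (by positivity)
      _ = x^i * (((n:ℝ)+1)^(-(t:ℤ)) * (n.choose (l+1) : ℝ)) * (c1 * Cd) := by
          rw [Ahat]; ring
      _ ≤ (lam^i/((n:ℝ)-1)^i) *
          ((1/((n:ℝ)-1)^t) * (2^(l+1) * ((n:ℝ)-1)^(l+1)/(((l+1).factorial:ℝ)))) *
          ((2:ℝ)^(l+1) * ((n:ℝ)-1)^d) := by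
          rw [hxp]
          apply mul_le_mul
          · apply mul_le_mul_of_nonneg_left _ (by positivity)
            exact mul_le_mul hzp hcl (by positivity) (by positivity)
          · exact mul_le_mul hc1b hCdb hCd0 (by positivity)
          · exact mul_nonneg hc10 hCd0
          · positivity
      _ = lam^i * 4^(l+1) * ((n:ℝ)-1)^(l+1+d) /
          (((n:ℝ)-1)^(i+t) * (((l+1).factorial:ℝ))) := by
          rw [pow_add ((n:ℝ)-1) i t, pow_add ((n:ℝ)-1) (l+1) d,
            show (4:ℝ)^(l+1) = 2^(l+1)*2^(l+1) by rw [← mul_pow]; norm_num]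
          have hf : (((l+1).factorial:ℝ)) ≠ 0 := by positivity
          field_simp
      _ ≤ lam^i * 4^(l+1) * ((n:ℝ)-1)^(i+t) /
          (((n:ℝ)-1)^(i+t) * (((l+1).factorial:ℝ))) := by
          gcongr lam^i * 4^(l+1) * ?_ / (((n:ℝ)-1)^(i+t) * (((l+1).factorial:ℝ)))
          exact pow_le_pow_right₀ hn1R (by rw [hld]; omega)
      _ = lam^i * 4^(l+1) / (((l+1).factorial:ℝ)) := by
          have h1 : (((n:ℝ)-1))^(i+t) ≠ 0 := by positivity
          have hf : (((l+1).factorial:ℝ)) ≠ 0 := by positivity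
          field_simp
      _ ≤ lam^i * 4^(i+t+1) / (((i+1-t).factorial:ℝ)) := by
          have hlit : l + 1 ≤ i + t + 1 := by omega
          refine div_le_div₀ (by positivity) ?_ (by positivity) ?_
          · exact mul_le_mul_of_nonneg_left (pow_le_pow_right₀ (by norm_num) hlit)
              (pow_nonneg hlam i)
          · exact_mod_cast Nat.cast_le.mpr (Nat.factorial_le hl_ge)
      _ = (4*lam)^i * 4^(t+1) / (((i+1-t).factorial:ℝ)) := by
          rw [mul_pow, show i+t+1 = i + (t+1) by omega, pow_add]
          ring
  calc ((n:ℝ)-1-ρ) * (((n - 1).choose i : ℝ) * x^i * (1-x)^(n-1-i) *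
      ((((l:ℕ):ℝ) + 1) / (n:ℝ) * Atil t n (l + 1) * V n i δ j))
      = (((n:ℝ)-1-ρ) * (((l:ℝ)+1)/(n:ℝ))) *
        (x^i * (1-x)^(n-1-i) * Atil t n (l+1) * (c1 * Cd)) := by
        rw [hVe]; field_simp
    _ ≤ ((i:ℝ) + 2*(t:ℝ) + 1) * ((4*lam)^i * 4^(t+1) / (((i+1-t).factorial : ℝ))) := by
        apply mul_le_mul hpre hmain _ (by positivity)
        apply mul_nonneg (mul_nonneg (mul_nonneg (pow_nonneg hx0 i) hk0) hAt0)
          (mul_nonneg hc10 hCd0)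

lemma Atil_nonneg (t n l : ℕ) : 0 ≤ Atil t n l := by
  rw [Atil]; split
  · rw [Ahat]; positivity
  · exact le_refl _

lemma V_nonneg (n i δ j : ℕ) : 0 ≤ V n i δ j := by
  rw [V]; positivity

lemma Qtil_nonneg (t n i : ℕ) : 0 ≤ Qtil t n i := by
  rw [Qtil]; split
  · exact le_refl _
  · apply sum_nonneg; intro δ _
    apply sum_nonneg; intro j _
    apply mul_nonneg (mul_nonneg (by positivity) (Atil_nonneg _ _ _)) (V_nonneg _ _ _ _)

lemma pm_le (lam : ℝ) (n i : ℕ) (hlam : 0 ≤ lam) (hlamn : lam ≤ (n:ℝ)-1) (hn2 : 2 ≤ n) :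
    ((n - 1).choose i : ℝ) * (lam/((n:ℝ)-1))^i * (1 - lam/((n:ℝ)-1))^(n-1-i)
      ≤ lam^i / (i.factorial : ℝ) := by
  have hn1R : (1:ℝ) ≤ (n:ℝ) - 1 := by
    have : (2:ℝ) ≤ (n:ℝ) := by exact_mod_cast hn2
    linarith
  have hnm : (0:ℝ) < (n:ℝ) - 1 := by linarith
  set x := lam/((n:ℝ)-1) with hx
  have hx0 : 0 ≤ x := div_nonneg hlam (le_of_lt hnm)
  have hx1 : x ≤ 1 := by rw [hx, div_le_one hnm]; exact hlamn
  have hxle : 0 ≤ 1 - x := by linarith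
  have hk1 : (1 - x)^(n-1-i) ≤ 1 := pow_le_one₀ hxle (by linarith)
  have hcast : ((n-1:ℕ):ℝ) = (n:ℝ) - 1 := by rw [Nat.cast_sub (by omega)]; norm_num
  have hcl : ((n-1).choose i : ℝ) ≤ ((n:ℝ)-1)^i / (i.factorial : ℝ) := by
    have := Nat.choose_le_pow_div (α := ℝ) i (n-1)
    rwa [hcast] at this
  calc ((n - 1).choose i : ℝ) * x^i * (1 - x)^(n-1-i)
      ≤ (((n:ℝ)-1)^i / (i.factorial : ℝ)) * x^i * 1 := by
        apply mul_le_mul (mul_le_mul hcl (le_refl _) (pow_nonneg hx0 i) (by positivity)) hk1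
          (pow_nonneg hxle _) (by positivity)
    _ = lam^i / (i.factorial : ℝ) := by
        rw [mul_one, hx, div_pow]
        field_simp

lemma double_count {f : ℕ → ℕ → ℝ} {t : ℕ} {b : ℝ} (hb : 0 ≤ b)
    (h : ∀ δ ∈ Icc 1 t, ∀ j ∈ range δ, f δ j ≤ b) :
    ∑ δ ∈ Icc 1 t, ∑ j ∈ range δ, f δ j ≤ (t:ℝ)^2 * b := by
  have step1 : ∑ δ ∈ Icc 1 t, ∑ j ∈ range δ, f δ j ≤ ∑ δ ∈ Icc 1 t, (t:ℝ) * b := by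
    apply sum_le_sum
    intro δ hδ
    calc ∑ j ∈ range δ, f δ j ≤ ∑ _j ∈ range δ, b := sum_le_sum (h δ hδ)
      _ = (δ:ℝ) * b := by rw [sum_const, card_range, nsmul_eq_mul]
      _ ≤ (t:ℝ) * b := by
          apply mul_le_mul_of_nonneg_right _ hb
          exact_mod_cast (mem_Icc.mp hδ).2
  refine le_trans step1 (le_of_eq ?_)
  rw [sum_const, Nat.card_Icc, nsmul_eq_mul]
  have : (t + 1 - 1 : ℕ) = t := by omega
  rw [this]
  ring

noncomputable def gbnd (t : ℕ) (lam ρ : ℝ) (i : ℕ) : ℝ :=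
  (ρ + 1) * ((t:ℝ)^2 + 1) * 4^(t+1) * ((i:ℝ) + 2*(t:ℝ) + 1) * (4*lam)^i /
    ((i+1-t).factorial : ℝ)

set_option maxHeartbeats 2000000 in
lemma F_le (t : ℕ) (lam ρ : ℝ) (ht3 : 3 ≤ t) (hlam : 0 ≤ lam) (hρ : 0 ≤ ρ) :
    ∀ᶠ n in atTop, ∀ i, ‖Ffn t lam ρ n i‖ ≤ gbnd t lam ρ i := by
  filter_upwards [eventually_ge_atTop 2, hcast.eventually_ge_atTop (lam + ρ + 1)] with n hn2 hnR
  intro i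
  have hgb0 : 0 ≤ gbnd t lam ρ i := by rw [gbnd]; positivity
  by_cases hi : i < n
  case neg => simp only [Ffn, if_neg hi, norm_zero]; exact hgb0
  case pos =>
    have hn1R : (1:ℝ) ≤ (n:ℝ) - 1 := by
      have : (2:ℝ) ≤ (n:ℝ) := by exact_mod_cast hn2
      linarith
    have hnm : (0:ℝ) < (n:ℝ) - 1 := by linarith
    have hlamn : lam ≤ (n:ℝ) - 1 := by linarith
    have hρn : ρ ≤ (n:ℝ) - 1 := by linarith
    set x := lam/((n:ℝ)-1) with hx
    set pm : ℝ := ((n - 1).choose i : ℝ) * x^i * (1 - x)^(n-1-i) with hpm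
    have hx0 : 0 ≤ x := div_nonneg hlam (le_of_lt hnm)
    have hx1 : x ≤ 1 := by rw [hx, div_le_one hnm]; exact hlamn
    have hpm0 : 0 ≤ pm := by
      apply mul_nonneg (mul_nonneg (by positivity) (pow_nonneg hx0 i))
        (pow_nonneg (by linarith) _)
    have hpmle : pm ≤ lam^i / (i.factorial : ℝ) := pm_le lam n i hlam hlamn hn2
    have hlam4 : lam^i / (i.factorial : ℝ) ≤ (4*lam)^i / (((i+1-t).factorial:ℝ)) := by
      refine div_le_div₀ (by positivity) ?_ (by positivity) ?_
      · rw [mul_pow]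
        calc lam^i = 1 * lam^i := by ring
          _ ≤ 4^i * lam^i := by
              apply mul_le_mul_of_nonneg_right _ (pow_nonneg hlam i)
              have := pow_le_pow_left₀ (by norm_num : (0:ℝ) ≤ 1) (by norm_num : (1:ℝ) ≤ 4) i
              simpa using this
      · exact_mod_cast Nat.cast_le.mpr (Nat.factorial_le (by omega : i + 1 - t ≤ i))
    -- bound on pm * |Ptil|
    have hPbound : pm * |Ptil t n i| ≤
        lam^i / (i.factorial : ℝ) + (t:ℝ)^2 * ((4*lam)^i * 4^t / (((i+1-t).factorial:ℝ))) := by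
      rcases lt_or_ge i t with hit | hit
      · rw [Ptil, if_pos hit]
        simp only [abs_zero, mul_zero]
        positivity
      · rcases le_or_gt i (n - t - 2) with hmid | hmid
        · rw [Ptil, if_neg (by omega), if_pos hmid]
          set S := ∑ δ ∈ Icc 1 t, ∑ j ∈ range δ,
            (((n : ℝ) - (ell i δ j : ℝ)) / (n : ℝ)) * Atil t n (ell i δ j) * V n i δ j with hS
          have hS0 : 0 ≤ S := by
            apply sum_nonneg; intro δ hδ
            apply sum_nonneg; intro j hj
            have hlle : (ell i δ j : ℝ) ≤ (n:ℝ) := by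
              have : ell i δ j ≤ n := by
                have := mem_Icc.mp hδ
                have := mem_range.mp hj
                simp only [ell]; omega
              exact_mod_cast this
            apply mul_nonneg (mul_nonneg (div_nonneg (by linarith) (by positivity))
              (Atil_nonneg _ _ _)) (V_nonneg _ _ _ _)
          have habs : |1 - S| ≤ 1 + S := by
            rw [abs_sub_comm]
            calc |S - 1| ≤ |S| + |(1:ℝ)| := abs_sub _ _
              _ = S + 1 := by rw [abs_of_nonneg hS0, abs_one]
              _ = 1 + S := by ring
          calc pm * |1 - S| ≤ pm * (1 + S) := mul_le_mul_of_nonneg_left habs hpm0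
            _ = pm + pm * S := by ring
            _ ≤ lam^i / (i.factorial : ℝ) +
                (t:ℝ)^2 * ((4*lam)^i * 4^t / (((i+1-t).factorial:ℝ))) := by
                apply add_le_add hpmle
                rw [hS, mul_sum]
                have : ∀ δ ∈ Icc 1 t, pm * (∑ j ∈ range δ,
                    (((n : ℝ) - (ell i δ j : ℝ)) / (n : ℝ)) * Atil t n (ell i δ j) * V n i δ j)
                    = ∑ j ∈ range δ, pm *
                      ((((n : ℝ) - (ell i δ j : ℝ)) / (n : ℝ)) * Atil t n (ell i δ j) * V n i δ j) :=
                  fun δ _ => mul_sum _ _ _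
                rw [sum_congr rfl this]
                apply double_count (by positivity)
                intro δ hδ j hj
                have h1 := (mem_Icc.mp hδ).1
                have h2 := (mem_Icc.mp hδ).2
                have h3 := mem_range.mp hj
                have := key_P t n i δ j lam hlam hlamn hn2 h1 h2 h3 hit hmid ht3
                calc pm * ((((n : ℝ) - (ell i δ j : ℝ)) / (n : ℝ)) * Atil t n (ell i δ j) *
                    V n i δ j)
                    = ((n - 1).choose i : ℝ) * x^i * (1 - x)^(n-1-i) *
                      ((((n:ℝ) - (ell i δ j : ℝ)) / (n:ℝ)) * Atil t n (ell i δ j) * V n i δ j) := by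
                      rw [hpm]
                  _ ≤ (4*lam)^i * 4^t / (((i+1-t).factorial:ℝ)) := this
        · rw [Ptil, if_neg (by omega), if_neg (by omega)]
          simp only [abs_one, mul_one]
          calc pm ≤ lam^i / (i.factorial : ℝ) := hpmle
            _ ≤ lam^i / (i.factorial : ℝ) +
                (t:ℝ)^2 * ((4*lam)^i * 4^t / (((i+1-t).factorial:ℝ))) :=
              le_add_of_nonneg_right (by positivity)
    -- bound on (n-1-ρ) * (pm * Qtil)
    have hQbound : ((n:ℝ)-1-ρ) * (pm * Qtil t n i) ≤
        (t:ℝ)^2 * (((i:ℝ) + 2*(t:ℝ) + 1) * ((4*lam)^i * 4^(t+1) / (((i+1-t).factorial:ℝ)))) := by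
      rcases le_or_gt i (t+1) with hit | hit
      · rw [Qtil, if_pos hit]
        simp only [mul_zero]
        positivity
      · rw [Qtil, if_neg (by omega)]
        rw [mul_sum, mul_sum]
        have hrw : ∀ δ ∈ Icc 1 t, ((n:ℝ)-1-ρ) * (pm * (∑ j ∈ range δ,
            (((ell i δ j : ℝ) + 1) / (n : ℝ)) * Atil t n (ell i δ j + 1) * V n i δ j))
            = ∑ j ∈ range δ, ((n:ℝ)-1-ρ) * (pm *
              ((((ell i δ j : ℝ) + 1) / (n : ℝ)) * Atil t n (ell i δ j + 1) * V n i δ j)) := by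
          intro δ _
          rw [mul_sum, mul_sum]
        rw [sum_congr rfl hrw]
        apply double_count (by positivity)
        intro δ hδ j hj
        have h1 := (mem_Icc.mp hδ).1
        have h2 := (mem_Icc.mp hδ).2
        have h3 := mem_range.mp hj
        have hk := key_Q t n i δ j lam ρ hlam hρ hlamn hρn hn2 h1 h2 h3 (by omega) hi ht3
        calc ((n:ℝ)-1-ρ) * (pm * ((((ell i δ j : ℝ) + 1) / (n : ℝ)) *
            Atil t n (ell i δ j + 1) * V n i δ j))
            = ((n:ℝ)-1-ρ) * (((n - 1).choose i : ℝ) * x^i * (1 - x)^(n-1-i) *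
              ((((ell i δ j : ℕ):ℝ) + 1) / (n:ℝ) * Atil t n (ell i δ j + 1) * V n i δ j)) := by
              rw [hpm]
          _ ≤ ((i:ℝ) + 2*(t:ℝ) + 1) * ((4*lam)^i * 4^(t+1) / (((i+1-t).factorial : ℝ))) := hk
    -- assemble
    have hQ0 : 0 ≤ Qtil t n i := Qtil_nonneg t n i
    have hFeq : Ffn t lam ρ n i = pm * Bfn t ρ n i := by rw [Ffn, if_pos hi, hpm, hx]
    rw [hFeq, Real.norm_eq_abs, abs_mul, abs_of_nonneg hpm0, Bfn]
    have hBabs : |ρ * Ptil t n i + ((n:ℝ) - 1 - ρ) * Qtil t n i| ≤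
        ρ * |Ptil t n i| + ((n:ℝ)-1-ρ) * Qtil t n i := by
      calc |ρ * Ptil t n i + ((n:ℝ) - 1 - ρ) * Qtil t n i|
          ≤ |ρ * Ptil t n i| + |((n:ℝ) - 1 - ρ) * Qtil t n i| := abs_add_le _ _
        _ = ρ * |Ptil t n i| + ((n:ℝ)-1-ρ) * Qtil t n i := by
            rw [abs_mul, abs_of_nonneg hρ, abs_mul, abs_of_nonneg (by linarith : (0:ℝ) ≤ (n:ℝ)-1-ρ),
              abs_of_nonneg hQ0]
    calc pm * |ρ * Ptil t n i + ((n:ℝ) - 1 - ρ) * Qtil t n i|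
        ≤ pm * (ρ * |Ptil t n i| + ((n:ℝ)-1-ρ) * Qtil t n i) :=
          mul_le_mul_of_nonneg_left hBabs hpm0
      _ = ρ * (pm * |Ptil t n i|) + ((n:ℝ)-1-ρ) * (pm * Qtil t n i) := by ring
      _ ≤ ρ * (lam^i / (i.factorial : ℝ) +
            (t:ℝ)^2 * ((4*lam)^i * 4^t / (((i+1-t).factorial:ℝ)))) +
          (t:ℝ)^2 * (((i:ℝ) + 2*(t:ℝ) + 1) * ((4*lam)^i * 4^(t+1) / (((i+1-t).factorial:ℝ)))) :=
          add_le_add (mul_le_mul_of_nonneg_left hPbound hρ) hQbound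
      _ ≤ gbnd t lam ρ i := by
          rw [gbnd]
          set A : ℝ := (4*lam)^i / (((i+1-t).factorial:ℝ)) with hA
          have hA0 : 0 ≤ A := by positivity
          have h4t : (1:ℝ) ≤ 4^t := by
            have := pow_le_pow_left₀ (by norm_num : (0:ℝ) ≤ 1) (by norm_num : (1:ℝ) ≤ 4) t
            simpa using this
          have h0i : (0:ℝ) ≤ (i:ℝ) := Nat.cast_nonneg i
          have h0t : (0:ℝ) ≤ (t:ℝ) := Nat.cast_nonneg t
          have hK1 : (1:ℝ) ≤ (i:ℝ) + 2*(t:ℝ) + 1 := by linarith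
          have hL1 : lam^i / (i.factorial : ℝ) ≤ A := by
            rw [hA]; exact hlam4
          have e1 : (4*lam)^i * 4^t / (((i+1-t).factorial:ℝ)) = 4^t * A := by
            rw [hA]; ring
          have e2 : (4*lam)^i * 4^(t+1) / (((i+1-t).factorial:ℝ)) = 4^(t+1) * A := by
            rw [hA]; ring
          have e3 : (ρ + 1) * ((t:ℝ)^2 + 1) * 4^(t+1) * ((i:ℝ) + 2*(t:ℝ) + 1) * (4*lam)^i /
              ((i+1-t).factorial : ℝ) =
              (ρ + 1) * ((t:ℝ)^2 + 1) * 4^(t+1) * ((i:ℝ) + 2*(t:ℝ) + 1) * A := by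
            rw [hA]; ring
          rw [e1, e2, e3]
          have h4p : (0:ℝ) < 4^t := by positivity
          have h4K : (4:ℝ)^t ≤ 4^(t+1) * ((i:ℝ) + 2*(t:ℝ) + 1) := by
            have hps : (4:ℝ)^(t+1) = 4^t * 4 := pow_succ 4 t
            nlinarith [h4p, hK1]
          have hinner : lam^i / (i.factorial : ℝ) + (t:ℝ)^2 * (4^t * A)
              ≤ ((t:ℝ)^2+1) * 4^(t+1) * ((i:ℝ) + 2*(t:ℝ) + 1) * A := by
            have h5 : ((t:ℝ)^2+1) * 4^t ≤ ((t:ℝ)^2+1) * (4^(t+1) * ((i:ℝ) + 2*(t:ℝ) + 1)) :=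
              mul_le_mul_of_nonneg_left h4K (by positivity)
            calc lam^i / (i.factorial : ℝ) + (t:ℝ)^2 * (4^t * A)
                ≤ A + (t:ℝ)^2 * (4^t * A) := add_le_add_left hL1 _
              _ = (1 + (t:ℝ)^2 * 4^t) * A := by ring
              _ ≤ (((t:ℝ)^2+1) * 4^t) * A := by
                  apply mul_le_mul_of_nonneg_right _ hA0
                  nlinarith [sq_nonneg (t:ℝ)]
              _ ≤ (((t:ℝ)^2+1) * 4^(t+1) * ((i:ℝ) + 2*(t:ℝ) + 1)) * A := by
                  apply mul_le_mul_of_nonneg_right _ hA0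
                  linarith [h5]
          have hb1 := mul_le_mul_of_nonneg_left hinner hρ
          have hb2 : (t:ℝ)^2 * (((i:ℝ) + 2*(t:ℝ) + 1) * (4^(t+1) * A)) ≤
              ((t:ℝ)^2+1) * 4^(t+1) * ((i:ℝ) + 2*(t:ℝ) + 1) * A := by
            have hC0 : (0:ℝ) ≤ 4^(t+1) * (((i:ℝ) + 2*(t:ℝ) + 1) * A) := by positivity
            have h6 : (t:ℝ)^2 ≤ (t:ℝ)^2 + 1 := by linarith
            have h7 := mul_le_mul_of_nonneg_right h6 hC0
            nlinarith [h7]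
          linarith [hb1, hb2]

lemma summable_shift (c : ℝ) (s : ℕ) :
    Summable (fun i : ℕ => c^i / ((i + 1 - s).factorial : ℝ)) := by
  rw [← summable_nat_add_iff s]
  have h1 : Summable (fun i : ℕ => (|c|^s * (|c|^i / (i.factorial : ℝ)))) :=
    (Real.summable_pow_div_factorial |c|).mul_left _
  apply Summable.of_norm_bounded h1
  intro i
  have he : (i + s + 1 - s) = i + 1 := by omega
  have h2 : ((i.factorial : ℕ):ℝ) ≤ (((i+1).factorial : ℕ):ℝ) := by
    exact_mod_cast Nat.factorial_le (by omega : i ≤ i + 1)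
  have h3 : (0:ℝ) < ((i.factorial : ℕ):ℝ) := by exact_mod_cast i.factorial_pos
  have h4 : (0:ℝ) < (((i+1).factorial : ℕ):ℝ) := by exact_mod_cast (i+1).factorial_pos
  rw [he, norm_div, norm_pow, Real.norm_eq_abs, Real.norm_eq_abs, abs_of_pos h4]
  calc |c|^(i+s) / (((i+1).factorial : ℕ):ℝ) ≤ |c|^(i+s) / ((i.factorial : ℕ):ℝ) :=
      div_le_div_of_nonneg_left (by positivity) h3 h2
    _ = |c|^s * (|c|^i / ((i.factorial : ℕ):ℝ)) := by rw [pow_add]; ring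

lemma summable_gbnd (t : ℕ) (lam ρ : ℝ) (hlam : 0 ≤ lam) (hρ : 0 ≤ ρ) :
    Summable (gbnd t lam ρ) := by
  set C0 : ℝ := (ρ + 1) * ((t:ℝ)^2 + 1) * 4^(t+1) with hC0
  have hC00 : 0 ≤ C0 := by rw [hC0]; positivity
  have hmaj : Summable (fun i : ℕ => (C0 * (2*(t:ℝ)+1)) * ((8*lam)^i / ((i+1-t).factorial : ℝ))) :=
    (summable_shift (8*lam) t).mul_left _
  apply Summable.of_nonneg_of_le (fun i => by rw [gbnd]; positivity) _ hmaj
  intro i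
  rw [gbnd, ← hC0]
  have hi2 : ((i:ℝ) + 1) ≤ 2^i := by
    have := Nat.lt_two_pow_self (n := i)
    exact_mod_cast Nat.succ_le_of_lt this
  have h0t : (0:ℝ) ≤ (t:ℝ) := Nat.cast_nonneg t
  have h0i : (0:ℝ) ≤ (i:ℝ) := Nat.cast_nonneg i
  have hnum : C0 * ((i:ℝ) + 2*(t:ℝ) + 1) * (4*lam)^i ≤ C0 * (2*(t:ℝ)+1) * (8*lam)^i := by
    have h1 : ((i:ℝ) + 2*(t:ℝ) + 1) ≤ (2*(t:ℝ)+1) * ((i:ℝ)+1) := by nlinarith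
    have h2 : ((i:ℝ) + 2*(t:ℝ) + 1) * (4*lam)^i ≤ (2*(t:ℝ)+1) * ((i:ℝ)+1) * (4*lam)^i :=
      mul_le_mul_of_nonneg_right h1 (by positivity)
    have h3 : (2*(t:ℝ)+1) * ((i:ℝ)+1) * (4*lam)^i ≤ (2*(t:ℝ)+1) * (2^i * (4*lam)^i) := by
      have := mul_le_mul_of_nonneg_right hi2 (by positivity : (0:ℝ) ≤ (4*lam)^i)
      nlinarith [this, mul_nonneg (mul_nonneg h0t (by positivity : (0:ℝ) ≤ (2:ℝ)^i)) (by positivity : (0:ℝ) ≤ (4*lam)^i), mul_le_mul_of_nonneg_left this (by linarith : (0:ℝ) ≤ 2*(t:ℝ)+1)]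
    have h4 : (2:ℝ)^i * (4*lam)^i = (8*lam)^i := by
      rw [← mul_pow]; norm_num; ring_nf
    calc C0 * ((i:ℝ) + 2*(t:ℝ) + 1) * (4*lam)^i
        = C0 * (((i:ℝ) + 2*(t:ℝ) + 1) * (4*lam)^i) := by ring
      _ ≤ C0 * ((2*(t:ℝ)+1) * (2^i * (4*lam)^i)) :=
          mul_le_mul_of_nonneg_left (le_trans h2 h3) hC00
      _ = C0 * (2*(t:ℝ)+1) * (8*lam)^i := by rw [← h4]; ring
  calc C0 * ((i:ℝ) + 2*(t:ℝ) + 1) * (4*lam)^i / ((i+1-t).factorial : ℝ)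
      ≤ C0 * (2*(t:ℝ)+1) * (8*lam)^i / ((i+1-t).factorial : ℝ) := by
        have hfp : (0:ℝ) < (((i+1-t).factorial : ℕ):ℝ) := by
          exact_mod_cast (i+1-t).factorial_pos
        exact div_le_div₀ (by positivity) hnum hfp (le_refl _)
    _ = (C0 * (2*(t:ℝ)+1)) * ((8*lam)^i / ((i+1-t).factorial : ℝ)) := by ring

lemma summable_pois (lam : ℝ) : Summable (fun i : ℕ => lam^i / (i.factorial : ℝ) * Real.exp (-lam)) :=
  (Real.summable_pow_div_factorial lam).mul_right _

lemma summable_aP (t : ℕ) (lam : ℝ) (hlam : 0 ≤ lam) :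
    Summable (fun i : ℕ => if t ≤ i then lam^i / (i.factorial : ℝ) * Real.exp (-lam) else 0) := by
  apply Summable.of_nonneg_of_le _ _ (summable_pois lam)
  · intro i; split <;> positivity
  · intro i; split
    · exact le_refl _
    · positivity

lemma summable_aQ (t : ℕ) (lam : ℝ) (hlam : 0 ≤ lam) :
    Summable (fun i : ℕ => if t + 2 ≤ i ∧ Odd i then lam^i / (i.factorial : ℝ) * Real.exp (-lam) else 0) := by
  apply Summable.of_nonneg_of_le _ _ (summable_pois lam)
  · intro i; split <;> positivity
  · intro i; split
    · exact le_refl _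
    · positivity

lemma tsum_alim (t : ℕ) (ht : 3 ≤ t) (htodd : Odd t) (lam ρ : ℝ) (hlam : 0 ≤ lam) (hρ : 0 ≤ ρ) :
    ∑' i, alim t lam ρ i =
      ρ * phi lam (t - 1) + (1 / ((t-1).factorial : ℝ)) * chi lam t := by
  have hsplit : ∀ i : ℕ, alim t lam ρ i =
      ρ * (if t ≤ i then lam^i / (i.factorial : ℝ) * Real.exp (-lam) else 0) +
      (1 / ((t-1).factorial : ℝ)) *
        (if t + 2 ≤ i ∧ Odd i then lam^i / (i.factorial : ℝ) * Real.exp (-lam) else 0) := by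
    intro i
    rw [alim]
    by_cases h1 : t ≤ i <;> by_cases h2 : t + 2 ≤ i ∧ Odd i <;>
      simp [h1, h2] <;> ring
  rw [tsum_congr hsplit]
  rw [Summable.tsum_add (((summable_aP t lam hlam).mul_left ρ))
    (((summable_aQ t lam hlam).mul_left _))]
  rw [tsum_mul_left, tsum_mul_left]
  congr 2
  · rw [phi]
    apply tsum_congr
    intro i
    have : t - 1 + 1 = t := by omega
    rw [this]
  · rw [chi]
    apply tsum_congr
    intro i
    have hiff : (t + 1 ≤ i ∧ Odd i) ↔ (t + 2 ≤ i ∧ Odd i) := by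
      constructor
      · rintro ⟨h1, h2⟩
        refine ⟨?_, h2⟩
        obtain ⟨a, ha⟩ := h2
        obtain ⟨b, hb⟩ := htodd
        omega
      · rintro ⟨h1, h2⟩
        exact ⟨by omega, h2⟩
    rw [if_congr hiff rfl rfl]

lemma heqF (t : ℕ) (lam ρ : ℝ) :
    (fun n : ℕ => ((n:ℝ) - 1) * fDEtil t n (lam/((n:ℝ)-1)) (ρ/((n:ℝ)-1)))
      =ᶠ[atTop] (fun n : ℕ => ∑' i, Ffn t lam ρ n i) := by
  filter_upwards [eventually_ge_atTop 2] with n hn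
  have hnm : ((n:ℝ)-1) ≠ 0 := by
    have : (2:ℝ) ≤ (n:ℝ) := by exact_mod_cast hn
    linarith
  rw [tsum_eq_sum (s := range n) (f := fun i => Ffn t lam ρ n i)
    (fun i hi => by
      show Ffn t lam ρ n i = 0
      rw [Ffn, if_neg (fun hlt => hi (mem_range.mpr hlt))])]
  rw [fDEtil, mul_sum]
  apply sum_congr rfl
  intro i hi
  have hin : i < n := mem_range.mp hi
  rw [Ffn, if_pos hin, Bfn]
  field_simp

/-- for odd `t ≥ 3`, `λ, ρ ≥ 0`,
`lim_{n→∞} (n−1)·f̃_n(λ/(n−1); ρ/(n−1)) = ρ·φ(λ;t−1) + (1/(t−1)!)·χ(λ;t)`. -/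
theorem stmt7 (t : ℕ) (ht : 3 ≤ t) (htodd : Odd t) (lam ρ : ℝ)
    (hlam : 0 ≤ lam) (hρ : 0 ≤ ρ) :
    Tendsto (fun n : ℕ =>
        ((n : ℝ) - 1) * fDEtil t n (lam / ((n : ℝ) - 1)) (ρ / ((n : ℝ) - 1)))
      atTop
      (nhds (ρ * phi lam (t - 1) + (1 / (Nat.factorial (t - 1) : ℝ)) * chi lam t)) := by
  have hpt : ∀ i, Tendsto (fun n => Ffn t lam ρ n i) atTop (nhds (alim t lam ρ i)) :=
    fun i => lim_F t i ht htodd lam ρ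
  have hdom := tendsto_tsum_of_dominated_convergence (𝓕 := atTop)
    (summable_gbnd t lam ρ hlam hρ) hpt (F_le t lam ρ ht hlam hρ)
  rw [← tsum_alim t ht htodd lam ρ hlam hρ]
  exact Tendsto.congr' (heqF t lam ρ).symm hdom
end

section
/- For every integer t ≥ 2 and every real λ ≥ 0, the potential function at ρ = 2t−2 is nonnegative: ∫_0^λ (z − (2t−2)·φ(z;t−1)) dz ≥ 0. -/
open Filter

/-- Potential function of the high-rate scaling limit of density evolution for
iterative hard-decision decoding without miscorrection:
`U(λ;ρ) = ∫_0^λ (z − ρ·φ(z;t−1)) dz`. -/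
noncomputable def U (t : ℕ) (lam ρ : ℝ) : ℝ :=
  ∫ z in (0 : ℝ)..lam, (z - ρ * phi z (t - 1))

open Finset

/-- closed form of phi -/
lemma phi_eq (z : ℝ) (k : ℕ) :
    phi z k = 1 - Real.exp (-z) * ∑ j ∈ range (k+1), z^j / (Nat.factorial j : ℝ) := by
  set g : ℕ → ℝ := fun i => z^i / (Nat.factorial i : ℝ) * Real.exp (-z) with hg
  have hsg : Summable g := (Real.summable_pow_div_factorial z).mul_right _
  have hfin : Summable (fun i => if i ∈ range (k+1) then g i else 0) :=
    summable_of_ne_finset_zero (s := range (k+1)) (fun i hi => if_neg hi)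
  have hsplit : ∀ i : ℕ, (if k + 1 ≤ i then g i else 0)
      = g i - (if i ∈ range (k+1) then g i else 0) := by
    intro i
    by_cases h : k + 1 ≤ i
    · rw [if_pos h, if_neg (by simpa [Finset.mem_range] using h)]; ring
    · rw [if_neg h, if_pos (by simpa [Finset.mem_range] using Nat.lt_of_not_le h)]; ring
  have h1 : ∑' i : ℕ, g i = 1 := by
    rw [hg]
    rw [tsum_mul_right]
    have h2 : ∑' i : ℕ, z^i / (Nat.factorial i : ℝ) = Real.exp z := by
      rw [Real.exp_eq_exp_ℝ, NormedSpace.exp_eq_tsum_div]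
    rw [h2, ← Real.exp_add]; simp
  have h3 : ∑' i : ℕ, (if i ∈ range (k+1) then g i else 0)
      = ∑ j ∈ range (k+1), z^j / (Nat.factorial j : ℝ) * Real.exp (-z) := by
    rw [tsum_eq_sum (s := range (k+1)) (fun i hi => if_neg hi)]
    exact Finset.sum_congr rfl (fun i hi => if_pos hi)
  calc phi z k = ∑' i : ℕ, (g i - (if i ∈ range (k+1) then g i else 0)) := by
        unfold phi
        exact tsum_congr hsplit
    _ = (∑' i : ℕ, g i) - ∑' i : ℕ, (if i ∈ range (k+1) then g i else 0) :=
        Summable.tsum_sub hsg hfin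
    _ = 1 - Real.exp (-z) * ∑ j ∈ range (k+1), z^j / (Nat.factorial j : ℝ) := by
        rw [h1, h3, ← Finset.sum_mul]; ring

/-- derivative of polynomial like sums -/
lemma hasDerivAt_polysum (k : ℕ) (a : ℕ → ℝ) (z : ℝ) :
    HasDerivAt (fun w => ∑ j ∈ range (k+1), a j * w^j / (Nat.factorial j : ℝ))
      (∑ j ∈ range k, a (j+1) * z^j / (Nat.factorial j : ℝ)) z := by
  have h : HasDerivAt (fun w => ∑ j ∈ range (k+1), a j * w^j / (Nat.factorial j : ℝ))
      (∑ j ∈ range (k+1), a j * ((j : ℝ) * z^(j-1)) / (Nat.factorial j : ℝ)) z := by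
    apply HasDerivAt.fun_sum
    intro j _
    exact ((hasDerivAt_pow j z).const_mul (a j)).div_const (Nat.factorial j : ℝ)
  convert h using 1
  rw [Finset.sum_range_succ' (fun j => a j * ((j : ℝ) * z^(j-1)) / (Nat.factorial j : ℝ)) k]
  simp only [Nat.cast_zero, zero_mul, mul_zero, Nat.factorial_zero, Nat.cast_one, zero_div,
    add_zero]
  apply Finset.sum_congr rfl
  intro j _
  have hfac : ((Nat.factorial (j+1) : ℝ)) = ((j:ℝ)+1) * (Nat.factorial j : ℝ) := by
    rw [Nat.factorial_succ]; push_cast; ring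
  have hj : ((j:ℝ)+1) ≠ 0 := by positivity
  have hf0 : (Nat.factorial j : ℝ) ≠ 0 := by positivity
  rw [hfac]
  push_cast
  field_simp

/-- antiderivative of the integrand -/
lemma hasDerivAt_F (k : ℕ) (z : ℝ) :
    HasDerivAt (fun w => w^2/2 - 2*(k:ℝ)*w
        - 2*(k:ℝ) * (Real.exp (-w) * ∑ j ∈ range (k+1), ((k:ℝ)+1-j) * w^j / (Nat.factorial j : ℝ)))
      (z - (2*(k:ℝ)) * phi z k) z := by
  have hT : HasDerivAt (fun w => ∑ j ∈ range (k+1), ((k:ℝ)+1-j) * w^j / (Nat.factorial j : ℝ))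
      (∑ j ∈ range k, ((k:ℝ)-j) * z^j / (Nat.factorial j : ℝ)) z := by
    have := hasDerivAt_polysum k (fun j => (k:ℝ)+1-j) z
    convert this using 2 with j
    push_cast; ring
  have hexp : HasDerivAt (fun w : ℝ => Real.exp (-w)) (-Real.exp (-z)) z := by
    simpa using (hasDerivAt_neg z).exp
  have hprod := hexp.mul hT
  have h1 : HasDerivAt (fun w : ℝ => w^2/2) z z := by
    simpa using (hasDerivAt_pow 2 z).div_const 2
  have h2 : HasDerivAt (fun w : ℝ => 2*(k:ℝ)*w) (2*(k:ℝ)) z := by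
    simpa using (hasDerivAt_id z).const_mul (2*(k:ℝ))
  have h := (h1.sub h2).sub (hprod.const_mul (2*(k:ℝ)))
  convert h using 1
  case e'_4 => rfl
  case e'_5 => rfl
  case e'_8 => rfl
  rw [phi_eq]
  -- need: z - 2k*(1 - e^{-z} S) = z - 2k - 2k*(-e^{-z} T + e^{-z} T')
  have hTS : (∑ j ∈ range (k+1), ((k:ℝ)+1-j) * z^j / (Nat.factorial j : ℝ))
      - (∑ j ∈ range k, ((k:ℝ)-j) * z^j / (Nat.factorial j : ℝ))
      = ∑ j ∈ range (k+1), z^j / (Nat.factorial j : ℝ) := by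
    have : (∑ j ∈ range k, ((k:ℝ)-j) * z^j / (Nat.factorial j : ℝ))
        = ∑ j ∈ range (k+1), ((k:ℝ)-j) * z^j / (Nat.factorial j : ℝ) := by
      rw [Finset.sum_range_succ]
      simp
    rw [this, ← Finset.sum_sub_distrib]
    apply Finset.sum_congr rfl
    intro j _
    ring
  linear_combination (-(2*(k:ℝ)) * Real.exp (-z)) * hTS


lemma key_ineq (k : ℕ) (hk : 1 ≤ k) (x : ℝ) (hx : 0 ≤ x) :
    Real.exp (-x) * ∑ j ∈ range (k+1), ((k:ℝ)+1-j) * x^j / (Nat.factorial j : ℝ)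
      ≤ x^2/(4*k) + ((k:ℝ)+1) - x := by
  set p : ℕ → ℝ := fun n => x^n / (Nat.factorial n : ℝ) with hp_def
  have hp : Summable p := Real.summable_pow_div_factorial x
  have hp_nonneg : ∀ n, 0 ≤ p n := fun n => by
    simp only [hp_def]; positivity
  have htsum_p : ∑' n, p n = Real.exp x := by
    rw [hp_def, Real.exp_eq_exp_ℝ, NormedSpace.exp_eq_tsum_div]
  -- f1 n = n * p n
  have hshift1 : ∀ n : ℕ, ((n+1 : ℕ) : ℝ) * p (n+1) = x * p n := by
    intro n
    have hfac : ((Nat.factorial (n+1) : ℝ)) = ((n:ℝ)+1) * (Nat.factorial n : ℝ) := by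
      rw [Nat.factorial_succ]; push_cast; ring
    have hf0 : (Nat.factorial n : ℝ) ≠ 0 := by positivity
    have hn1 : ((n:ℝ)+1) ≠ 0 := by positivity
    simp only [hp_def, hfac]
    push_cast
    field_simp
    ring
  have hs1 : Summable (fun n : ℕ => (n : ℝ) * p n) := by
    apply (summable_nat_add_iff 1).mp
    exact Summable.congr (hp.mul_left x) (fun n => (hshift1 n).symm)
  have htsum1 : ∑' n : ℕ, (n : ℝ) * p n = x * Real.exp x := by
    have h := Summable.sum_add_tsum_nat_add (f := fun n : ℕ => (n : ℝ) * p n) 1 hs1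
    have h2 : ∑' n : ℕ, ((n+1 : ℕ) : ℝ) * p (n+1) = x * Real.exp x := by
      rw [tsum_congr hshift1, tsum_mul_left, htsum_p]
    simp only [Finset.sum_range_one, Nat.cast_zero, zero_mul, zero_add] at h
    rw [← h]
    exact h2
  -- f2 n = n*(n-1) * p n
  have hshift2 : ∀ n : ℕ, ((n+2 : ℕ) : ℝ) * (((n+2 : ℕ) : ℝ) - 1) * p (n+2) = x^2 * p n := by
    intro n
    have hfac : ((Nat.factorial (n+2) : ℝ)) = ((n:ℝ)+2) * (((n:ℝ)+1) * (Nat.factorial n : ℝ)) := by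
      rw [Nat.factorial_succ, Nat.factorial_succ]; push_cast; ring
    have hf0 : (Nat.factorial n : ℝ) ≠ 0 := by positivity
    have hn1 : ((n:ℝ)+1) ≠ 0 := by positivity
    have hn2 : ((n:ℝ)+2) ≠ 0 := by positivity
    simp only [hp_def, hfac]
    push_cast
    field_simp
    ring
  have hs2 : Summable (fun n : ℕ => (n : ℝ) * ((n : ℝ) - 1) * p n) := by
    apply (summable_nat_add_iff 2).mp
    exact Summable.congr (hp.mul_left (x^2)) (fun n => (hshift2 n).symm)
  have htsum2 : ∑' n : ℕ, (n : ℝ) * ((n : ℝ) - 1) * p n = x^2 * Real.exp x := by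
    have h := Summable.sum_add_tsum_nat_add (f := fun n : ℕ => (n : ℝ) * ((n : ℝ) - 1) * p n) 2 hs2
    have h2 : ∑' n : ℕ, ((n+2 : ℕ) : ℝ) * (((n+2 : ℕ) : ℝ) - 1) * p (n+2) = x^2 * Real.exp x := by
      rw [tsum_congr hshift2, tsum_mul_left, htsum_p]
    have h3 : ∑ i ∈ range 2, (i : ℝ) * ((i : ℝ) - 1) * p i = 0 := by
      simp [Finset.sum_range_succ]
    rw [h3, zero_add] at h
    rw [← h]
    exact h2
  -- the coefficient functions
  set A : ℕ → ℝ := fun n => if n ≤ k then ((k:ℝ)+1-(n:ℝ)) else 0 with hA_def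
  set b : ℕ → ℝ := fun n => (n:ℝ) * ((n:ℝ)-1) / (4*(k:ℝ)) + ((k:ℝ)+1) - (n:ℝ) with hb_def
  have hk' : (1:ℝ) ≤ (k:ℝ) := by exact_mod_cast hk
  have hAb : ∀ n : ℕ, A n ≤ b n := by
    intro n
    have hnn : (0:ℝ) ≤ (n:ℝ) * ((n:ℝ)-1) := by
      rcases Nat.eq_zero_or_pos n with h | h
      · simp [h]
      · have : (1:ℝ) ≤ (n:ℝ) := by exact_mod_cast h
        nlinarith
    by_cases h : n ≤ k
    · simp only [hA_def, hb_def, if_pos h]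
      have : (0:ℝ) ≤ (n:ℝ) * ((n:ℝ)-1) / (4*(k:ℝ)) := by positivity
      linarith
    · simp only [hA_def, hb_def, if_neg h]
      have h4k : (0:ℝ) < 4*(k:ℝ) := by linarith
      have key : 0 ≤ ((n:ℝ)*((n:ℝ)-1) + (4*(k:ℝ))*(((k:ℝ)+1) - (n:ℝ))) := by
        nlinarith [sq_nonneg (2*(n:ℝ) - 4*(k:ℝ) - 1)]
      have hq := div_nonneg key h4k.le
      have heq : (n:ℝ)*((n:ℝ)-1)/(4*(k:ℝ)) + (((k:ℝ)+1) - (n:ℝ))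
          = ((n:ℝ)*((n:ℝ)-1) + (4*(k:ℝ))*(((k:ℝ)+1) - (n:ℝ)))/(4*(k:ℝ)) := by
        field_simp
      linarith [heq ▸ hq]
  -- tsum of A * p is the finite sum T
  have hTA : ∑' n : ℕ, A n * p n
      = ∑ j ∈ range (k+1), ((k:ℝ)+1-j) * x^j / (Nat.factorial j : ℝ) := by
    rw [tsum_eq_sum (s := range (k+1))]
    · apply Finset.sum_congr rfl
      intro j hj
      rw [Finset.mem_range, Nat.lt_succ_iff] at hj
      simp only [hA_def, hp_def, if_pos hj]
      ring
    · intro i hi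
      rw [Finset.mem_range, Nat.lt_succ_iff] at hi
      simp only [hA_def, if_neg hi, zero_mul]
  have hsumA : Summable (fun n : ℕ => A n * p n) := by
    apply summable_of_ne_finset_zero (s := range (k+1))
    intro i hi
    rw [Finset.mem_range, Nat.lt_succ_iff] at hi
    simp only [hA_def, if_neg hi, zero_mul]
  have hbp_eq : (fun n : ℕ => b n * p n)
      = fun n : ℕ => (1/(4*(k:ℝ))) * ((n:ℝ)*((n:ℝ)-1)*p n) + (((k:ℝ)+1) * p n - (n:ℝ)*p n) := by
    funext n
    simp only [hb_def]
    ring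
  have hsum_bp : Summable (fun n : ℕ => b n * p n) := by
    rw [hbp_eq]
    exact (hs2.mul_left _).add ((hp.mul_left _).sub hs1)
  have htsum_bp : ∑' n : ℕ, b n * p n = Real.exp x * (x^2/(4*(k:ℝ)) + ((k:ℝ)+1) - x) := by
    rw [hbp_eq, Summable.tsum_add (hs2.mul_left _) ((hp.mul_left _).sub hs1),
      Summable.tsum_sub (hp.mul_left _) hs1, tsum_mul_left, tsum_mul_left, htsum2, htsum1, htsum_p]
    have hk0 : (k:ℝ) ≠ 0 := by positivity
    field_simp
    ring
  have hle : ∑' n : ℕ, A n * p n ≤ ∑' n : ℕ, b n * p n :=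
    Summable.tsum_le_tsum (fun n => mul_le_mul_of_nonneg_right (hAb n) (hp_nonneg n)) hsumA hsum_bp
  rw [hTA] at hle
  rw [htsum_bp] at hle
  calc Real.exp (-x) * ∑ j ∈ range (k+1), ((k:ℝ)+1-j) * x^j / (Nat.factorial j : ℝ)
      ≤ Real.exp (-x) * (Real.exp x * (x^2/(4*(k:ℝ)) + ((k:ℝ)+1) - x)) :=
        mul_le_mul_of_nonneg_left hle (Real.exp_pos _).le
    _ = x^2/(4*(k:ℝ)) + ((k:ℝ)+1) - x := by
        rw [← mul_assoc, ← Real.exp_add]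
        simp


/-- for every integer `t ≥ 2` and every `λ ≥ 0`, the potential
function at `ρ = 2t−2` is nonnegative: `∫_0^λ (z − (2t−2)·φ(z;t−1)) dz ≥ 0`. -/
theorem stmt8 (t : ℕ) (ht : 2 ≤ t) (lam : ℝ) (hlam : 0 ≤ lam) :
    0 ≤ U t lam (2 * (t : ℝ) - 2) := by
  have hk : 1 ≤ t - 1 := by omega
  set k := t - 1 with hk_def
  have hcast : (t : ℝ) = (k : ℝ) + 1 := by
    have h : t = k + 1 := by omega
    rw [h]; push_cast; ring
  have hρ : 2*(t:ℝ)-2 = 2*(k:ℝ) := by rw [hcast]; ring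
  have hcont : Continuous fun z : ℝ => z - (2*(t:ℝ)-2) * phi z k := by
    have he : (fun z : ℝ => z - (2*(t:ℝ)-2) * phi z k)
        = fun z => z - (2*(t:ℝ)-2) * (1 - Real.exp (-z)
            * ∑ j ∈ range (k+1), z^j / (Nat.factorial j : ℝ)) := by
      funext z; rw [phi_eq]
    rw [he]
    continuity
  have hderiv : ∀ z ∈ Set.uIcc (0:ℝ) lam,
      HasDerivAt (fun w => w^2/2 - 2*(k:ℝ)*w - 2*(k:ℝ) * (Real.exp (-w)
          * ∑ j ∈ range (k+1), ((k:ℝ)+1-j) * w^j / (Nat.factorial j : ℝ)))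
        (z - (2*(t:ℝ)-2) * phi z k) z := by
    intro z _
    rw [hρ]
    exact hasDerivAt_F k z
  have hU : U t lam (2*(t:ℝ)-2)
      = (lam^2/2 - 2*(k:ℝ)*lam - 2*(k:ℝ) * (Real.exp (-lam)
            * ∑ j ∈ range (k+1), ((k:ℝ)+1-j) * lam^j / (Nat.factorial j : ℝ)))
        - ((0:ℝ)^2/2 - 2*(k:ℝ)*0 - 2*(k:ℝ) * (Real.exp (-(0:ℝ))
            * ∑ j ∈ range (k+1), ((k:ℝ)+1-j) * (0:ℝ)^j / (Nat.factorial j : ℝ))) := by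
    unfold U
    rw [← hk_def]
    exact intervalIntegral.integral_eq_sub_of_hasDerivAt hderiv (hcont.intervalIntegrable _ _)
  have hT0 : ∑ j ∈ range (k+1), ((k:ℝ)+1-j) * (0:ℝ)^j / (Nat.factorial j : ℝ) = (k:ℝ)+1 := by
    rw [Finset.sum_eq_single 0]
    · simp
    · intro j _ hj; rw [zero_pow hj]; simp
    · intro h; exact absurd (Finset.mem_range.mpr (Nat.succ_pos k)) h
  have hkey := key_ineq k hk lam hlam
  rw [hU, hT0]
  have hkpos : (0:ℝ) < (k:ℝ) := by
    have : (1:ℝ) ≤ (k:ℝ) := by exact_mod_cast hk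
    linarith
  have h2 : 2*(k:ℝ) * (lam^2/(4*(k:ℝ)) + ((k:ℝ)+1) - lam)
      = lam^2/2 + 2*(k:ℝ)*((k:ℝ)+1) - 2*(k:ℝ)*lam := by
    field_simp
    ring
  simp only [neg_zero, Real.exp_zero, one_mul]
  nlinarith [mul_le_mul_of_nonneg_left hkey (by positivity : (0:ℝ) ≤ 2*(k:ℝ))]
end
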